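/- arXiv:2103.10875 — 10 statements merged into one kernel-verified Lean document; each statement's English description precedes it below -/
import Mathlib

section
/- Let N, I1, I2, tau, tau1, tau2 be positive real numbers and let rho_aux be a real number with 0 ≤ rho_aux < 1. Define rho_k = N·tau/(N·tau + I_k·tau_k) for k = 1,2, the average number of observations per level n̄ = 2N/(I1 + I2), and T_aux = (1 − rho_aux)⁻¹. If n̄ ≥ 1, then (1 − rho_1·rho_2·rho_aux)⁻¹ ≤ (1 + tau/min(tau1, tau2)) · min(n̄, T_aux). -/
set_option maxHeartbeats 2000000 in
/-- Auxiliary polynomial inequality for the key bound. -/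
lemma stmt_0_aux (N I1 I2 tau tau1 tau2 m : ℝ)
    (hN : 0 < N) (hI1 : 0 < I1) (hI2 : 0 < I2)
    (htau : 0 < tau) (htau1 : 0 < tau1) (htau2 : 0 < tau2)
    (htm0 : 0 < m) (hm1 : m ≤ tau1) (hm2 : m ≤ tau2)
    (h2N : I1 + I2 ≤ 2 * N) :
    m * (I1 + I2) * ((N * tau + I1 * tau1) * (N * tau + I2 * tau2))
      ≤ (m + tau) * (2 * N)
        * (N * tau * (I1 * tau1 + I2 * tau2) + I1 * tau1 * (I2 * tau2)) := by
  have hS : (I1 + I2) * m ≤ I1 * tau1 + I2 * tau2 := by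
    nlinarith [mul_le_mul_of_nonneg_left hm1 hI1.le, mul_le_mul_of_nonneg_left hm2 hI2.le]
  have hd : (0:ℝ) ≤ 2 * N - (I1 + I2) := by linarith
  have t1 : 0 ≤ m * (N * tau) * (I1 * tau1 + I2 * tau2) * (2 * N - (I1 + I2)) :=
    mul_nonneg (mul_nonneg (mul_nonneg htm0.le (mul_pos hN htau).le)
      (by positivity : (0:ℝ) ≤ I1 * tau1 + I2 * tau2)) hd
  have t2 : 0 ≤ m * (I1 * tau1 * (I2 * tau2)) * (2 * N - (I1 + I2)) :=
    mul_nonneg (mul_nonneg htm0.le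
      (mul_nonneg (mul_pos hI1 htau1).le (mul_pos hI2 htau2).le)) hd
  have t3 : 0 ≤ (N * tau) * (N * tau) * (2 * (I1 * tau1 + I2 * tau2) - (I1 + I2) * m) :=
    mul_nonneg (mul_nonneg (mul_pos hN htau).le (mul_pos hN htau).le)
      (by nlinarith [hS] : (0:ℝ) ≤ 2 * (I1 * tau1 + I2 * tau2) - (I1 + I2) * m)
  have t4 : 0 ≤ 2 * (N * tau) * (I1 * tau1 * (I2 * tau2)) :=
    mul_nonneg (by positivity)
      (mul_nonneg (mul_pos hI1 htau1).le (mul_pos hI2 htau2).le)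
  nlinarith [t1, t2, t3, t4]

/-- Upper bound in Theorem 1: the relaxation time of the collapsed Gibbs sampler,
`(1 - ρ₁ρ₂ρ_aux)⁻¹` with `ρ_k = Nτ/(Nτ + I_k τ_k)`, is at most
`(1 + τ/min(τ₁,τ₂)) · min(n̄, T_aux)` where `n̄ = 2N/(I₁+I₂)` and `T_aux = (1-ρ_aux)⁻¹`. -/
theorem stmt_0 (N I1 I2 tau tau1 tau2 rho_aux : ℝ)
    (hN : 0 < N) (hI1 : 0 < I1) (hI2 : 0 < I2)
    (htau : 0 < tau) (htau1 : 0 < tau1) (htau2 : 0 < tau2)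
    (haux0 : 0 ≤ rho_aux) (haux1 : rho_aux < 1)
    (hnbar : 1 ≤ 2 * N / (I1 + I2)) :
    (1 - N * tau / (N * tau + I1 * tau1) * (N * tau / (N * tau + I2 * tau2)) * rho_aux)⁻¹
      ≤ (1 + tau / min tau1 tau2) * min (2 * N / (I1 + I2)) (1 - rho_aux)⁻¹ := by
  have hD1 : 0 < N * tau + I1 * tau1 := by positivity
  have hD2 : 0 < N * tau + I2 * tau2 := by positivity
  set r1 : ℝ := N * tau / (N * tau + I1 * tau1) with hr1def
  set r2 : ℝ := N * tau / (N * tau + I2 * tau2) with hr2def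
  have hr1a : 0 < r1 := by positivity
  have hr2a : 0 < r2 := by positivity
  have hr1b : r1 < 1 := by rw [hr1def, div_lt_one hD1]; nlinarith
  have hr2b : r2 < 1 := by rw [hr2def, div_lt_one hD2]; nlinarith
  clear_value r1 r2
  have hsum : 0 < I1 + I2 := by linarith
  have h2N : I1 + I2 ≤ 2 * N := by
    have := (one_le_div hsum).mp hnbar; linarith
  set m : ℝ := min tau1 tau2 with hm
  have htm0 : 0 < m := lt_min htau1 htau2
  have hm1 : m ≤ tau1 := min_le_left _ _
  have hm2 : m ≤ tau2 := min_le_right _ _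
  clear_value m
  have hC1 : (1:ℝ) ≤ 1 + tau / m := by
    have : 0 < tau / m := by positivity
    linarith
  have hrr : r1 * r2 < 1 := by
    have := mul_lt_of_lt_one_right hr1a hr2b
    linarith
  have hrle : r1 * r2 * rho_aux ≤ rho_aux := by
    nlinarith [mul_nonneg (mul_nonneg hr1a.le hr2a.le) (sub_nonneg.mpr hrr.le)]
  have hrle2 : r1 * r2 * rho_aux ≤ r1 * r2 := by
    nlinarith [mul_nonneg (mul_nonneg hr1a.le hr2a.le) (by linarith : (0:ℝ) ≤ 1 - rho_aux)]
  have hpos_aux : 0 < 1 - rho_aux := by linarith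
  have hpos_ρ : 0 < 1 - r1 * r2 * rho_aux := by linarith
  have keyA : (1 - r1 * r2 * rho_aux)⁻¹ ≤ (1 + tau / m) * (1 - rho_aux)⁻¹ := by
    have h1 : (1 - r1 * r2 * rho_aux)⁻¹ ≤ (1 - rho_aux)⁻¹ :=
      inv_anti₀ hpos_aux (by linarith)
    calc (1 - r1 * r2 * rho_aux)⁻¹ ≤ (1 - rho_aux)⁻¹ := h1
      _ ≤ (1 + tau / m) * (1 - rho_aux)⁻¹ := by
          nlinarith [inv_pos.mpr hpos_aux]
  have keyB : (1 - r1 * r2 * rho_aux)⁻¹ ≤ (1 + tau / m) * (2 * N / (I1 + I2)) := by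
    have hpos12 : 0 < 1 - r1 * r2 := by linarith
    have h1 : (1 - r1 * r2 * rho_aux)⁻¹ ≤ (1 - r1 * r2)⁻¹ :=
      inv_anti₀ hpos12 (by linarith)
    have h2 : (1 - r1 * r2)⁻¹ ≤ (1 + tau / m) * (2 * N / (I1 + I2)) := by
      rw [inv_le_iff_one_le_mul₀ hpos12, hr1def, hr2def, div_mul_div_comm]
      have e1 : 1 - N * tau * (N * tau) / ((N * tau + I1 * tau1) * (N * tau + I2 * tau2))
          = (N * tau * (I1 * tau1 + I2 * tau2) + I1 * tau1 * (I2 * tau2))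
            / ((N * tau + I1 * tau1) * (N * tau + I2 * tau2)) := by
        field_simp; ring
      have e2 : 1 + tau / m = (m + tau) / m := by field_simp
      rw [e1, e2, div_mul_div_comm, div_mul_div_comm, le_div_iff₀ (by positivity), one_mul]
      exact stmt_0_aux N I1 I2 tau tau1 tau2 m hN hI1 hI2 htau htau1 htau2 htm0 hm1 hm2 h2N
    linarith
  rcases min_cases (2 * N / (I1 + I2)) (1 - rho_aux)⁻¹ with ⟨h, _⟩ | ⟨h, _⟩ <;> rw [h]
  · exact keyB
  · exact keyA
end

section
/- Let N, I1, I2, tau, tau1, tau2 be positive real numbers and let rho_aux be a real number with 0 ≤ rho_aux < 1. Define rho_k = N·tau/(N·tau + I_k·tau_k) for k = 1,2, n̄ = 2N/(I1 + I2), and T_aux = (1 − rho_aux)⁻¹. Then (1 − rho_1·rho_2·rho_aux)⁻¹ ≥ (1/3) · min(1, tau/(2·max(tau1, tau2))) · min(n̄, T_aux). -/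
set_option maxHeartbeats 1600000


/-- Lower bound in Theorem 1: the relaxation time of the collapsed Gibbs sampler,
`(1 - ρ₁ρ₂ρ_aux)⁻¹` with `ρ_k = Nτ/(Nτ + I_k τ_k)`, is at least
`(1/3) · min(1, τ/(2 max(τ₁,τ₂))) · min(n̄, T_aux)` where `n̄ = 2N/(I₁+I₂)` and
`T_aux = (1-ρ_aux)⁻¹`. -/
theorem stmt_1 (N I1 I2 tau tau1 tau2 rho_aux : ℝ)
    (hN : 0 < N) (hI1 : 0 < I1) (hI2 : 0 < I2)
    (htau : 0 < tau) (htau1 : 0 < tau1) (htau2 : 0 < tau2)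
    (haux0 : 0 ≤ rho_aux) (haux1 : rho_aux < 1) :
    (1 / 3) * min 1 (tau / (2 * max tau1 tau2)) * min (2 * N / (I1 + I2)) (1 - rho_aux)⁻¹
      ≤ (1 - N * tau / (N * tau + I1 * tau1) * (N * tau / (N * tau + I2 * tau2)) * rho_aux)⁻¹ := by
  have hM : 0 < max tau1 tau2 := lt_max_of_lt_left htau1
  have hd1 : 0 < N * tau + I1 * tau1 := by positivity
  have hd2 : 0 < N * tau + I2 * tau2 := by positivity
  set r1 := N * tau / (N * tau + I1 * tau1) with hr1
  set r2 := N * tau / (N * tau + I2 * tau2) with hr2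
  have hr1pos : 0 < r1 := by rw [hr1]; positivity
  have hr2pos : 0 < r2 := by rw [hr2]; positivity
  have hr1lt : r1 < 1 := by
    rw [hr1, div_lt_one hd1]; nlinarith [mul_pos hI1 htau1]
  have hr2lt : r2 < 1 := by
    rw [hr2, div_lt_one hd2]; nlinarith [mul_pos hI2 htau2]
  have h1r : 1 - r1 = I1 * tau1 / (N * tau + I1 * tau1) := by rw [hr1]; field_simp; ring
  have h2r : 1 - r2 = I2 * tau2 / (N * tau + I2 * tau2) := by rw [hr2]; field_simp; ring
  clear_value r1 r2
  have hc : 0 < 1 - rho_aux := by linarith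
  have h12 : r1 * r2 < 1 := by nlinarith [mul_lt_mul_of_pos_right hr1lt hr2pos]
  have g1 : 0 ≤ r1 * r2 * (1 - rho_aux) :=
    mul_nonneg (mul_nonneg hr1pos.le hr2pos.le) hc.le
  have hpos : 0 < 1 - r1 * r2 * rho_aux := by nlinarith [g1, h12]
  have hkey : 1 - r1 * r2 * rho_aux ≤ (1 - r1) + (1 - r2) + (1 - rho_aux) := by
    have e1 : 0 ≤ (1 - r1) * (1 - r2) :=
      mul_nonneg (by linarith) (by linarith)
    have e2 : 0 ≤ (1 - r1 * r2) * (1 - rho_aux) :=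
      mul_nonneg (by linarith) hc.le
    nlinarith [e1, e2]
  set m1 := min 1 (tau / (2 * max tau1 tau2)) with hm1
  set m2 := min (2 * N / (I1 + I2)) (1 - rho_aux)⁻¹ with hm2
  have hm1nn : 0 ≤ m1 := le_min one_pos.le (by positivity)
  have hm2nn : 0 ≤ m2 := le_min (by positivity) (by positivity)
  have hm1a : m1 ≤ tau / (2 * max tau1 tau2) := min_le_right _ _
  have hm1b : m1 ≤ 1 := min_le_left _ _
  have hm2a : m2 ≤ 2 * N / (I1 + I2) := min_le_left _ _
  have hm2b : m2 ≤ (1 - rho_aux)⁻¹ := min_le_right _ _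
  clear_value m1 m2
  -- auxiliary bound: m1 * m2 ≤ N*tau / ((I1+I2) * max tau1 tau2)
  have hII : 0 < I1 + I2 := by linarith
  have hmm : m1 * m2 ≤ N * tau / ((I1 + I2) * max tau1 tau2) := by
    calc m1 * m2 ≤ (tau / (2 * max tau1 tau2)) * (2 * N / (I1 + I2)) :=
          mul_le_mul hm1a hm2a hm2nn (by positivity)
      _ = N * tau / ((I1 + I2) * max tau1 tau2) := by
          field_simp
  have h1 : m1 * m2 * (1 - r1) ≤ 1 := by
    rw [h1r]
    have hb : N * tau / ((I1 + I2) * max tau1 tau2) * (I1 * tau1 / (N * tau + I1 * tau1)) ≤ 1 := by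
      rw [div_mul_div_comm, div_le_one (by positivity)]
      have key : I1 * tau1 ≤ (I1 + I2) * max tau1 tau2 :=
        mul_le_mul (by linarith) (le_max_left _ _) htau1.le (by positivity)
      calc N * tau * (I1 * tau1) ≤ (N * tau + I1 * tau1) * ((I1 + I2) * max tau1 tau2) :=
            mul_le_mul (le_add_of_nonneg_right (by positivity)) key (by positivity) (by positivity)
        _ = (I1 + I2) * max tau1 tau2 * (N * tau + I1 * tau1) := by ring
    calc m1 * m2 * (I1 * tau1 / (N * tau + I1 * tau1))
        ≤ N * tau / ((I1 + I2) * max tau1 tau2) * (I1 * tau1 / (N * tau + I1 * tau1)) :=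
          mul_le_mul_of_nonneg_right hmm (by positivity)
      _ ≤ 1 := hb
  have h2 : m1 * m2 * (1 - r2) ≤ 1 := by
    rw [h2r]
    have hb : N * tau / ((I1 + I2) * max tau1 tau2) * (I2 * tau2 / (N * tau + I2 * tau2)) ≤ 1 := by
      rw [div_mul_div_comm, div_le_one (by positivity)]
      have key : I2 * tau2 ≤ (I1 + I2) * max tau1 tau2 :=
        mul_le_mul (by linarith) (le_max_right _ _) htau2.le (by positivity)
      calc N * tau * (I2 * tau2) ≤ (N * tau + I2 * tau2) * ((I1 + I2) * max tau1 tau2) :=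
            mul_le_mul (le_add_of_nonneg_right (by positivity)) key (by positivity) (by positivity)
        _ = (I1 + I2) * max tau1 tau2 * (N * tau + I2 * tau2) := by ring
    calc m1 * m2 * (I2 * tau2 / (N * tau + I2 * tau2))
        ≤ N * tau / ((I1 + I2) * max tau1 tau2) * (I2 * tau2 / (N * tau + I2 * tau2)) :=
          mul_le_mul_of_nonneg_right hmm (by positivity)
      _ ≤ 1 := hb
  have h3 : m1 * m2 * (1 - rho_aux) ≤ 1 := by
    calc m1 * m2 * (1 - rho_aux) ≤ 1 * ((1 - rho_aux)⁻¹ * (1 - rho_aux)) := by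
          rw [mul_assoc]
          exact mul_le_mul hm1b (mul_le_mul_of_nonneg_right hm2b hc.le)
            (by positivity) one_pos.le
      _ = 1 := by rw [one_mul, inv_mul_cancel₀ hc.ne']
  have hS : 0 < (1 - r1) + (1 - r2) + (1 - rho_aux) := by linarith
  have step1 : (1 / 3) * m1 * m2 ≤ ((1 - r1) + (1 - r2) + (1 - rho_aux))⁻¹ := by
    rw [← one_div, le_div_iff₀ hS]
    nlinarith
  have step2 : ((1 - r1) + (1 - r2) + (1 - rho_aux))⁻¹ ≤ (1 - r1 * r2 * rho_aux)⁻¹ :=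
    inv_anti₀ hpos hkey
  linarith
end

section
/- Let G be a simple graph on the vertex set {1,…,M} with its natural linear order. If ℓ < m < j, m is a fill-in neighbor of ℓ, and j is a fill-in neighbor of ℓ, then j is a fill-in neighbor of m. -/
/-- `j` is a fill-in neighbor of `m` in the graph `G` (on vertices `{1,…,M} ⊆ ℕ` with their
natural order): `j = m`, or there is a walk in `G` from `m` to `j` all of whose internal
vertices are strictly smaller than `m`. -/
def FillIn (G : SimpleGraph ℕ) (m j : ℕ) : Prop :=
  j = m ∨ ∃ w : G.Walk m j, ∀ v ∈ w.support, v = m ∨ v = j ∨ v < m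

/-- Closure property of the fill-in pattern (key structural fact in the proof of the upper
bound of Theorem 2): if `ℓ < m < j`, `m` is a fill-in neighbor of `ℓ` and `j` is a fill-in
neighbor of `ℓ`, then `j` is a fill-in neighbor of `m`. -/
theorem stmt_9 (G : SimpleGraph ℕ) (l m j : ℕ) (hlm : l < m) (hmj : m < j)
    (h1 : FillIn G l m) (h2 : FillIn G l j) : FillIn G m j := by
  rcases h1 with h1 | ⟨w1, hw1⟩
  · omega
  rcases h2 with h2 | ⟨w2, hw2⟩
  · omega
  right
  refine ⟨w1.reverse.append w2, ?_⟩
  intro v hv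
  rw [SimpleGraph.Walk.mem_support_append_iff, SimpleGraph.Walk.support_reverse,
    List.mem_reverse] at hv
  rcases hv with hv | hv
  · rcases hw1 v hv with h | h | h <;> omega
  · rcases hw2 v hv with h | h | h
    · omega
    · omega
    · omega
end

section
/- Let G be a finite simple graph on the linearly ordered vertex set {1,…,M} satisfying the closure property: whenever ℓ < m < j and G has edges {ℓ,m} and {ℓ,j}, then G also has the edge {m,j}. Let e denote the number of edges of G and let T denote the number of triples (ℓ,m,j) with ℓ < m < j such that {ℓ,m} and {ℓ,j} are edges of G. Then T² ≤ e³ (equivalently, T ≤ e^{3/2}). -/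
open Finset


/-- Combinatorial content of the upper bound of Theorem 2: if `G` is a simple graph on the
linearly ordered vertex set `{1,…,M}` (modelled as `Fin M`) satisfying the closure property
(whenever `ℓ < m < j` and `{ℓ,m}`, `{ℓ,j}` are edges, so is `{m,j}`), then the number `T` of
triples `(ℓ,m,j)` with `ℓ < m < j` such that `{ℓ,m}` and `{ℓ,j}` are edges satisfies
`T² ≤ e³`, where `e` is the number of edges of `G`. -/
theorem stmt_10 (M : ℕ) (G : SimpleGraph (Fin M))
    (hclosure : ∀ l m j : Fin M, l < m → m < j → G.Adj l m → G.Adj l j → G.Adj m j) :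
    (Nat.card {t : Fin M × Fin M × Fin M //
        t.1 < t.2.1 ∧ t.2.1 < t.2.2 ∧ G.Adj t.1 t.2.1 ∧ G.Adj t.1 t.2.2}) ^ 2
      ≤ (Nat.card G.edgeSet) ^ 3 := by
  classical
  -- edge finset
  have hEfin : G.edgeSet.Finite := Set.toFinite _
  set E : Finset (Sym2 (Fin M)) := hEfin.toFinset with hE
  have hmemE : ∀ a b : Fin M, s(a,b) ∈ E ↔ G.Adj a b := by
    intro a b
    rw [hE, Set.Finite.mem_toFinset, SimpleGraph.mem_edgeSet]
  set e := E.card with he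
  have hcardE : Nat.card G.edgeSet = e := by
    rw [he, hE, Set.Finite.card_toFinset, Nat.card_eq_fintype_card]
  -- upper neighborhoods
  set N : Fin M → Finset (Fin M) :=
    fun l => univ.filter (fun m => l < m ∧ G.Adj l m) with hN
  have hmemN : ∀ l m : Fin M, m ∈ N l ↔ l < m ∧ G.Adj l m := by
    intro l m; simp [hN]
  set d : Fin M → ℕ := fun l => (N l).card with hd
  have hms : ∀ a : ℕ, a * a - a = a * (a - 1) := by
    intro a; rw [Nat.mul_sub_one, Nat.mul_comm]
  -- F2 : the upper neighborhood of any vertex is a clique, so d m (d m - 1) ≤ 2e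
  have F2 : ∀ m : Fin M, d m * (d m - 1) ≤ 2 * e := by
    intro m
    rw [← hms, ← Finset.offDiag_card]
    have hinj : ((N m).offDiag).card ≤ (E ×ˢ (univ : Finset Bool)).card := by
      apply Finset.card_le_card_of_injOn (fun p => (s(p.1, p.2), decide (p.1 < p.2)))
      · intro p hp
        rw [Finset.mem_coe, Finset.mem_offDiag] at hp
        obtain ⟨h1, h2, h3⟩ := hp
        rw [hmemN] at h1 h2
        simp only [Finset.mem_coe, Finset.mem_product, Finset.mem_univ, and_true]
        rw [hmemE]
        rcases lt_or_gt_of_ne h3 with h | h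
        · exact hclosure m p.1 p.2 h1.1 h h1.2 h2.2
        · exact (hclosure m p.2 p.1 h2.1 h h2.2 h1.2).symm
      · intro p hp q hq hpq
        rw [Finset.mem_coe, Finset.mem_offDiag] at hp hq
        have h1 : s(p.1, p.2) = s(q.1, q.2) := congrArg Prod.fst hpq
        have h2 : (p.1 < p.2 ↔ q.1 < q.2) :=
          decide_eq_decide.mp (congrArg Prod.snd hpq)
        rw [Sym2.eq_iff] at h1
        rcases h1 with ⟨ha, hb⟩ | ⟨ha, hb⟩
        · exact Prod.ext ha hb
        · exfalso
          rcases lt_or_gt_of_ne hp.2.2 with h | h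
          · have := h2.mp h
            rw [← ha, ← hb] at this
            exact absurd this (not_lt_of_gt h)
          · have : ¬ p.1 < p.2 := not_lt_of_gt h
            have h4 : ¬ q.1 < q.2 := fun hc => this (h2.mpr hc)
            have h5 : q.1 ≠ q.2 := hq.2.2
            rcases lt_or_gt_of_ne h5 with h6 | h6
            · exact h4 h6
            · rw [← ha, ← hb] at h6
              exact this h6
    calc ((N m).offDiag).card ≤ (E ×ˢ (univ : Finset Bool)).card := hinj
      _ = e * 2 := by rw [Finset.card_product, Finset.card_univ, Fintype.card_bool]
      _ = 2 * e := Nat.mul_comm _ _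
  -- F1 : sum of up-degrees equals e
  set Pairs : Finset (Fin M × Fin M) :=
    univ.filter (fun p => p.1 < p.2 ∧ G.Adj p.1 p.2) with hPairs
  have hmemPairs : ∀ p : Fin M × Fin M, p ∈ Pairs ↔ p.1 < p.2 ∧ G.Adj p.1 p.2 := by
    intro p; simp [hPairs]
  have hPfib : Pairs.card = ∑ l : Fin M, d l := by
    rw [Finset.card_eq_sum_card_fiberwise (f := fun p => p.1) (t := univ)
      (fun x _ => mem_univ _)]
    apply Finset.sum_congr rfl
    intro l _
    apply Finset.card_nbij (fun p => p.2)
    · intro p hp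
      simp only [Finset.mem_coe, Finset.mem_filter] at hp
      rw [hmemPairs] at hp
      rw [Finset.mem_coe, hmemN, ← hp.2]
      exact hp.1
    · intro p hp q hq hpq
      simp only [Finset.mem_coe, Finset.mem_filter] at hp hq
      exact Prod.ext (hp.2.trans hq.2.symm) hpq
    · intro m hm
      rw [Finset.mem_coe, hmemN] at hm
      refine ⟨(l, m), ?_, rfl⟩
      simp only [Finset.coe_filter, Set.mem_setOf_eq]
      exact ⟨(hmemPairs _).mpr ⟨hm.1, hm.2⟩, trivial⟩
  have hPE : Pairs.card = e := by
    apply Finset.card_nbij (fun p => s(p.1, p.2))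
    · intro p hp
      rw [Finset.mem_coe, hmemPairs] at hp
      exact Finset.mem_coe.mpr ((hmemE _ _).mpr hp.2)
    · intro p hp q hq hpq
      rw [Finset.mem_coe, hmemPairs] at hp hq
      rw [Sym2.eq_iff] at hpq
      rcases hpq with ⟨ha, hb⟩ | ⟨ha, hb⟩
      · exact Prod.ext ha hb
      · exfalso
        rw [ha, hb] at hp
        exact absurd (lt_trans hp.1 hq.1) (lt_irrefl _)
    · intro z hz
      rw [Finset.coe_filter]
      induction z using Sym2.ind with
      | _ a b =>
        rw [Finset.mem_coe, hmemE] at hz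
        rcases lt_or_gt_of_ne hz.ne with h | h
        · exact ⟨(a, b), by simp [hmemPairs, h, hz], rfl⟩
        · exact ⟨(b, a), by simp [hmemPairs, h, hz.symm], Sym2.eq_swap⟩
  have F1 : ∑ l : Fin M, d l = e := hPfib ▸ hPE
  -- the triple count
  set P : Fin M × Fin M × Fin M → Prop := fun t =>
    t.1 < t.2.1 ∧ t.2.1 < t.2.2 ∧ G.Adj t.1 t.2.1 ∧ G.Adj t.1 t.2.2 with hP
  set TF : Finset (Fin M × Fin M × Fin M) := univ.filter P with hTF
  set T := TF.card with hTdef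
  have hT : Nat.card {t : Fin M × Fin M × Fin M //
      t.1 < t.2.1 ∧ t.2.1 < t.2.2 ∧ G.Adj t.1 t.2.1 ∧ G.Adj t.1 t.2.2} = T := by
    rw [Nat.card_eq_fintype_card, Fintype.card_subtype]
  -- fiberwise bound: for each l, twice the number of triples starting at l is
  -- at most d l * (d l - 1)
  have hfib : ∀ l : Fin M, (TF.filter (fun t => t.1 = l)).card * 2
      ≤ d l * (d l - 1) := by
    intro l
    rw [← hms, ← Finset.offDiag_card]
    have hcp : (TF.filter (fun t => t.1 = l)).card * 2
        = ((TF.filter (fun t => t.1 = l)) ×ˢ (univ : Finset Bool)).card := by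
      rw [Finset.card_product, Finset.card_univ, Fintype.card_bool]
    rw [hcp]
    apply Finset.card_le_card_of_injOn
      (fun q => if q.2 then (q.1.2.1, q.1.2.2) else (q.1.2.2, q.1.2.1))
    · rintro ⟨t, b⟩ hq
      simp only [Finset.mem_coe, Finset.mem_product, Finset.mem_filter, Finset.mem_univ, true_and,
        and_true] at hq
      obtain ⟨hPt, hl⟩ := hq
      simp only [hTF, hP, Finset.mem_filter, Finset.mem_univ, true_and] at hPt
      obtain ⟨h1, h2, h3, h4⟩ := hPt
      have hm : t.2.1 ∈ N l := (hmemN _ _).mpr ⟨hl ▸ h1, hl ▸ h3⟩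
      have hj : t.2.2 ∈ N l := (hmemN _ _).mpr ⟨hl ▸ lt_trans h1 h2, hl ▸ h4⟩
      cases b with
      | true => exact Finset.mem_offDiag.mpr ⟨hm, hj, ne_of_lt h2⟩
      | false => exact Finset.mem_offDiag.mpr ⟨hj, hm, (ne_of_lt h2).symm⟩
    · rintro ⟨t, b⟩ hq ⟨t', b'⟩ hq' heq
      simp only [Finset.coe_product, Set.mem_prod, Finset.mem_coe, Finset.mem_filter] at hq hq'
      obtain ⟨⟨hPt, hl⟩, -⟩ := hq
      obtain ⟨⟨hPt', hl'⟩, -⟩ := hq'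
      simp only [hTF, hP, Finset.mem_filter, Finset.mem_univ, true_and] at hPt hPt'
      cases b <;> cases b' <;> simp only [if_true, if_false, Bool.false_eq_true,
        cond_eq_if, Prod.mk.injEq] at heq
      · -- false, false
        refine Prod.ext (Prod.ext (hl.trans hl'.symm) (Prod.ext heq.2 heq.1)) rfl
      · -- mixed case
        exfalso
        have h2 := hPt'.2.1
        rw [← heq.1, ← heq.2] at h2
        exact absurd (lt_trans hPt.2.1 h2) (lt_irrefl _)
      · -- mixed case
        exfalso
        have h2 := hPt'.2.1
        rw [← heq.1, ← heq.2] at h2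
        exact absurd (lt_trans hPt.2.1 h2) (lt_irrefl _)
      · refine Prod.ext (Prod.ext (hl.trans hl'.symm) (Prod.ext heq.1 heq.2)) rfl
  have hK : ∀ m : Fin M, d m - 1 ≤ Nat.sqrt (2 * e) := by
    intro m
    rw [Nat.le_sqrt]
    calc (d m - 1) * (d m - 1) ≤ d m * (d m - 1) :=
          Nat.mul_le_mul_right _ (Nat.sub_le _ _)
      _ ≤ 2 * e := F2 m
  have hTsum : T = ∑ l : Fin M, (TF.filter (fun t => t.1 = l)).card :=
    Finset.card_eq_sum_card_fiberwise (fun x _ => mem_univ _)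
  have h2T : T * 2 ≤ e * Nat.sqrt (2 * e) := by
    calc T * 2 = ∑ l : Fin M, (TF.filter (fun t => t.1 = l)).card * 2 := by
          rw [hTsum, Finset.sum_mul]
      _ ≤ ∑ l : Fin M, d l * (d l - 1) := Finset.sum_le_sum (fun l _ => hfib l)
      _ ≤ ∑ l : Fin M, d l * Nat.sqrt (2 * e) :=
          Finset.sum_le_sum (fun l _ => Nat.mul_le_mul_left _ (hK l))
      _ = (∑ l : Fin M, d l) * Nat.sqrt (2 * e) := (Finset.sum_mul _ _ _).symm
      _ = e * Nat.sqrt (2 * e) := by rw [F1]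
  rw [hT, hcardE]
  have h4 : (T * 2) * (T * 2) ≤ (e * Nat.sqrt (2 * e)) * (e * Nat.sqrt (2 * e)) :=
    Nat.mul_le_mul h2T h2T
  have h5 : (e * Nat.sqrt (2 * e)) * (e * Nat.sqrt (2 * e)) ≤ e * e * (2 * e) := by
    calc (e * Nat.sqrt (2 * e)) * (e * Nat.sqrt (2 * e))
        = e * e * (Nat.sqrt (2 * e) * Nat.sqrt (2 * e)) := by ring
      _ ≤ e * e * (2 * e) := Nat.mul_le_mul_left _ (Nat.sqrt_le _)
  have h6 : 2 * (2 * T ^ 2) ≤ 2 * e ^ 3 := by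
    calc 2 * (2 * T ^ 2) = (T * 2) * (T * 2) := by ring
      _ ≤ e * e * (2 * e) := le_trans h4 h5
      _ = 2 * e ^ 3 := by ring
  have h7 : 2 * T ^ 2 ≤ e ^ 3 := Nat.le_of_mul_le_mul_left h6 (by norm_num)
  exact le_trans (Nat.le_mul_of_pos_left _ (by norm_num)) h7
end

section
/- For any finite simple graph with e edges, the number of triangles (3-cliques) is at most e^{3/2}; equivalently, the square of the number of triangles is at most e³. -/
open Finset

/-- Discrete Loomis–Whitney inequality for triples. -/
lemma lw3 {α : Type*} [Fintype α] [DecidableEq α] (A : Finset (α × α × α)) :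
    #A ^ 2 ≤ #(A.image fun p => (p.1, p.2.1)) *
      (#(A.image fun p => (p.1, p.2.2)) * #(A.image fun p => (p.2.1, p.2.2))) := by
  set P12 := A.image fun p => (p.1, p.2.1) with hP12
  set P13 := A.image fun p => (p.1, p.2.2) with hP13
  set P23 := A.image fun p => (p.2.1, p.2.2) with hP23
  have hA : #A = ∑ q ∈ P12, #(A.filter fun p => (p.1, p.2.1) = q) :=
    card_eq_sum_card_image _ _
  have cs : #A ^ 2 ≤ #P12 * ∑ q ∈ P12, #(A.filter fun p => (p.1, p.2.1) = q) ^ 2 := by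
    rw [hA]; exact sq_sum_le_card_mul_sum_sq
  have key : ∀ q ∈ P12, #(A.filter fun p => (p.1, p.2.1) = q) ^ 2 ≤
      #(P13.filter fun r => r.1 = q.1) * #(P23.filter fun r => r.1 = q.2) := by
    intro q _
    rw [sq]
    refine Nat.mul_le_mul (card_le_card_of_injOn (fun p => (p.1, p.2.2)) ?_ ?_)
      (card_le_card_of_injOn (fun p => (p.2.1, p.2.2)) ?_ ?_)
    · intro p hp
      simp only [mem_coe, mem_filter, Prod.ext_iff] at hp ⊢
      exact ⟨mem_image_of_mem _ hp.1, hp.2.1⟩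
    · intro p hp p' hp' h
      simp only [mem_coe, mem_filter, Prod.ext_iff] at hp hp'
      simp only [Prod.ext_iff] at h
      exact Prod.ext h.1 (Prod.ext (hp.2.2.trans hp'.2.2.symm) h.2)
    · intro p hp
      simp only [mem_coe, mem_filter, Prod.ext_iff] at hp ⊢
      exact ⟨mem_image_of_mem _ hp.1, hp.2.2⟩
    · intro p hp p' hp' h
      simp only [mem_coe, mem_filter, Prod.ext_iff] at hp hp'
      simp only [Prod.ext_iff] at h
      exact Prod.ext (hp.2.1.trans hp'.2.1.symm) (Prod.ext h.1 h.2)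
  have sum_le : ∑ q ∈ P12, #(A.filter fun p => (p.1, p.2.1) = q) ^ 2 ≤ #P13 * #P23 := by
    calc ∑ q ∈ P12, #(A.filter fun p => (p.1, p.2.1) = q) ^ 2
        ≤ ∑ q ∈ P12, #(P13.filter fun r => r.1 = q.1) * #(P23.filter fun r => r.1 = q.2) :=
          Finset.sum_le_sum key
      _ ≤ ∑ q ∈ (univ : Finset (α × α)),
            #(P13.filter fun r => r.1 = q.1) * #(P23.filter fun r => r.1 = q.2) :=
          Finset.sum_le_sum_of_subset (subset_univ _)
      _ = (∑ x : α, #(P13.filter fun r => r.1 = x)) * (∑ y : α, #(P23.filter fun r => r.1 = y)) := by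
          rw [Finset.sum_mul_sum, ← Finset.univ_product_univ, Finset.sum_product]
      _ = #P13 * #P23 := by
          rw [← card_eq_sum_card_fiberwise (fun r _ => mem_univ r.1),
            ← card_eq_sum_card_fiberwise (fun r _ => mem_univ r.1)]
  calc #A ^ 2 ≤ #P12 * ∑ q ∈ P12, #(A.filter fun p => (p.1, p.2.1) = q) ^ 2 := cs
    _ ≤ #P12 * (#P13 * #P23) := Nat.mul_le_mul_left _ sum_le
section helpers
variable {α : Type*} [LinearOrder α] [DecidableEq α]

lemma sort3 {a b c : α} (hab : a ≠ b) (hac : a ≠ c) (hbc : b ≠ c) :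
    ∃ x y z : α, x < y ∧ y < z ∧ ({x, y, z} : Finset α) = {a, b, c} := by
  rcases hab.lt_or_gt with h1 | h1 <;> rcases hac.lt_or_gt with h2 | h2 <;>
    rcases hbc.lt_or_gt with h3 | h3
  · exact ⟨a, b, c, h1, h3, rfl⟩
  · exact ⟨a, c, b, h2, h3, by ext t; simp; tauto⟩
  · exact absurd (h2.trans (h1.trans h3)) (lt_irrefl c)
  · exact ⟨c, a, b, h2, h1, by ext t; simp; tauto⟩
  · exact ⟨b, a, c, h1, h2, by ext t; simp; tauto⟩
  · exact absurd (h2.trans (h3.trans h1)) (lt_irrefl a)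
  · exact ⟨b, c, a, h3, h2, by ext t; simp; tauto⟩
  · exact ⟨c, b, a, h3, h1, by ext t; simp; tauto⟩

lemma min3 {x y z : α} (h1 : x < y) (h2 : y < z) :
    ({x, y, z} : Finset α).min' ⟨x, by simp⟩ = x := by
  apply le_antisymm (Finset.min'_le _ x (by simp))
  apply Finset.le_min'
  intro t ht
  simp only [Finset.mem_insert, Finset.mem_singleton] at ht
  rcases ht with rfl | rfl | rfl
  · exact le_refl _
  · exact h1.le
  · exact (h1.trans h2).le

lemma max3 {x y z : α} (h1 : x < y) (h2 : y < z) :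
    ({x, y, z} : Finset α).max' ⟨x, by simp⟩ = z := by
  apply le_antisymm
  · apply Finset.max'_le
    intro t ht
    simp only [Finset.mem_insert, Finset.mem_singleton] at ht
    rcases ht with rfl | rfl | rfl
    · exact (h1.trans h2).le
    · exact h2.le
    · exact le_refl _
  · exact Finset.le_max' _ z (by simp)

lemma sort3_unique {a b c d e f : α} (h1 : a < b) (h2 : b < c) (h3 : d < e) (h4 : e < f)
    (h : ({a, b, c} : Finset α) = {d, e, f}) : a = d ∧ b = e ∧ c = f := by
  have tmin : ∀ (s : Finset α) (hs : s.Nonempty), s = {a, b, c} → s.min' hs = a := by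
    rintro s hs rfl; exact min3 h1 h2
  have tmax : ∀ (s : Finset α) (hs : s.Nonempty), s = {a, b, c} → s.max' hs = c := by
    rintro s hs rfl; exact max3 h1 h2
  have had : a = d := ((tmin {d, e, f} ⟨d, by simp⟩ h.symm).symm.trans (min3 h3 h4))
  have hcf : c = f := ((tmax {d, e, f} ⟨d, by simp⟩ h.symm).symm.trans (max3 h3 h4))
  refine ⟨had, ?_, hcf⟩
  have hb : b ∈ ({d, e, f} : Finset α) := by rw [← h]; simp
  simp only [Finset.mem_insert, Finset.mem_singleton] at hb
  rcases hb with rfl | rfl | rfl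
  · exact absurd h1 (had ▸ lt_irrefl _)
  · rfl
  · exact absurd h2 (hcf ▸ lt_irrefl _)

end helpers
/-- Number of 3-cliques squared is at most (number of edges) cubed, Finset form. -/
lemma tri_sq_le {V : Type*} [Fintype V] [DecidableEq V] (G : SimpleGraph V)
    [DecidableRel G.Adj] :
    #(univ.filter fun s : Finset V => G.IsNClique 3 s) ^ 2 ≤ #G.edgeFinset ^ 3 := by
  classical
  letI : LinearOrder V := LinearOrder.lift' (Fintype.equivFin V) (Fintype.equivFin V).injective
  set A : Finset (V × V × V) := univ.filter
    (fun p : V × V × V => p.1 < p.2.1 ∧ p.2.1 < p.2.2 ∧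
      G.Adj p.1 p.2.1 ∧ G.Adj p.1 p.2.2 ∧ G.Adj p.2.1 p.2.2) with hA
  set Elt : Finset (V × V) := univ.filter (fun q : V × V => q.1 < q.2 ∧ G.Adj q.1 q.2) with hE
  -- #T = #A
  have hTA : #(univ.filter fun s : Finset V => G.IsNClique 3 s) = #A := by
    refine (Finset.card_bij (fun p _ => ({p.1, p.2.1, p.2.2} : Finset V)) ?_ ?_ ?_).symm
    · rintro ⟨a, b, c⟩ hp
      simp only [hA, mem_filter, mem_univ, true_and] at hp
      obtain ⟨h1, h2, h3, h4, h5⟩ := hp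
      simp only [mem_filter, mem_univ, true_and]
      exact SimpleGraph.is3Clique_triple_iff.2 ⟨h3, h4, h5⟩
    · rintro ⟨a, b, c⟩ hp ⟨d, e, f⟩ hq h
      simp only [hA, mem_filter, mem_univ, true_and] at hp hq
      obtain ⟨h1, h2, h5⟩ := sort3_unique hp.1 hp.2.1 hq.1 hq.2.1 (by exact h)
      simp [h1, h2, h5]
    · intro s hs
      simp only [mem_filter, mem_univ, true_and] at hs
      obtain ⟨a, b, c, hab, hac, hbc, rfl⟩ := Finset.card_eq_three.1 hs.card_eq
      obtain ⟨x, y, z, hxy, hyz, hxyz⟩ := sort3 hab hac hbc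
      have hcl : G.IsNClique 3 ({x, y, z} : Finset V) := by rw [hxyz]; exact hs
      obtain ⟨a1, a2, a3⟩ := SimpleGraph.is3Clique_triple_iff.1 hcl
      exact ⟨(x, y, z), by simp [hA, hxy, hyz, a1, a2, a3], by exact hxyz⟩
  -- projections are in Elt
  have hproj12 : (A.image fun p => (p.1, p.2.1)) ⊆ Elt := by
    intro q hq
    obtain ⟨p, hp, rfl⟩ := Finset.mem_image.1 hq
    simp only [hA, mem_filter, mem_univ, true_and] at hp
    simp only [hE, mem_filter, mem_univ, true_and]
    exact ⟨hp.1, hp.2.2.1⟩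
  have hproj13 : (A.image fun p => (p.1, p.2.2)) ⊆ Elt := by
    intro q hq
    obtain ⟨p, hp, rfl⟩ := Finset.mem_image.1 hq
    simp only [hA, mem_filter, mem_univ, true_and] at hp
    simp only [hE, mem_filter, mem_univ, true_and]
    exact ⟨hp.1.trans hp.2.1, hp.2.2.2.1⟩
  have hproj23 : (A.image fun p => (p.2.1, p.2.2)) ⊆ Elt := by
    intro q hq
    obtain ⟨p, hp, rfl⟩ := Finset.mem_image.1 hq
    simp only [hA, mem_filter, mem_univ, true_and] at hp
    simp only [hE, mem_filter, mem_univ, true_and]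
    exact ⟨hp.2.1, hp.2.2.2.2⟩
  -- #Elt = #edgeFinset
  have hEe : #Elt = #G.edgeFinset := by
    refine Finset.card_bij (fun q _ => s(q.1, q.2)) ?_ ?_ ?_
    · rintro ⟨a, b⟩ hq
      simp only [hE, mem_filter, mem_univ, true_and] at hq
      simpa [SimpleGraph.mem_edgeFinset, SimpleGraph.mem_edgeSet] using hq.2
    · rintro ⟨a, b⟩ hq ⟨c, d⟩ hq' h
      simp only [hE, mem_filter, mem_univ, true_and] at hq hq'
      rw [Sym2.eq_iff] at h
      rcases h with ⟨rfl, rfl⟩ | ⟨rfl, rfl⟩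
      · rfl
      · exact absurd hq'.1 (lt_asymm hq.1)
    · intro e he
      induction e with
      | _ u v =>
        rw [SimpleGraph.mem_edgeFinset, SimpleGraph.mem_edgeSet] at he
        rcases (he.ne).lt_or_gt with h | h
        · exact ⟨(u, v), by simp [hE, h, he], rfl⟩
        · exact ⟨(v, u), by simp [hE, h, he.symm], Sym2.eq_swap⟩
  calc #(univ.filter fun s : Finset V => G.IsNClique 3 s) ^ 2
      = #A ^ 2 := by rw [hTA]
    _ ≤ #(A.image fun p => (p.1, p.2.1)) *
        (#(A.image fun p => (p.1, p.2.2)) * #(A.image fun p => (p.2.1, p.2.2))) := lw3 A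
    _ ≤ #Elt * (#Elt * #Elt) := by
        exact Nat.mul_le_mul (card_le_card hproj12)
          (Nat.mul_le_mul (card_le_card hproj13) (card_le_card hproj23))
    _ = #G.edgeFinset ^ 3 := by rw [hEe]; ring

/-- For any finite simple graph with `e` edges, the number `T` of triangles (3-cliques) is
at most `e^{3/2}`; equivalently, `T² ≤ e³`. -/
theorem stmt_11 {V : Type*} [Fintype V] (G : SimpleGraph V) :
    ((Nat.card {s : Finset V // G.IsNClique 3 s} : ℝ)
        ≤ (Nat.card G.edgeSet : ℝ) ^ ((3 : ℝ) / 2))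
    ∧ (Nat.card {s : Finset V // G.IsNClique 3 s}) ^ 2 ≤ (Nat.card G.edgeSet) ^ 3 := by
  classical
  have hT : Nat.card {s : Finset V // G.IsNClique 3 s}
      = #(univ.filter fun s : Finset V => G.IsNClique 3 s) := by
    rw [Nat.card_eq_fintype_card, Fintype.card_subtype]
  have hE : Nat.card G.edgeSet = #G.edgeFinset := by
    rw [Nat.card_eq_fintype_card, SimpleGraph.edgeFinset_card]
  have key : (Nat.card {s : Finset V // G.IsNClique 3 s}) ^ 2
      ≤ (Nat.card G.edgeSet) ^ 3 := by
    rw [hT, hE]; exact tri_sq_le G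
  refine ⟨?_, key⟩
  have h0 : (0 : ℝ) ≤ (Nat.card G.edgeSet : ℝ) := Nat.cast_nonneg _
  have heq : (Nat.card G.edgeSet : ℝ) ^ ((3 : ℝ) / 2)
      = Real.sqrt ((Nat.card G.edgeSet : ℝ) ^ (3 : ℕ)) := by
    rw [Real.sqrt_eq_rpow, ← Real.rpow_natCast (Nat.card G.edgeSet : ℝ) 3,
      ← Real.rpow_mul h0]
    norm_num
  rw [heq, Real.le_sqrt (Nat.cast_nonneg _) (by positivity)]
  exact_mod_cast key
end

section
/- Let G be a simple graph on the vertex set {1,…,M} with its natural linear order, and suppose some vertex v is adjacent to every other vertex of G. Then for every m with v ≤ m and every j with m < j ≤ M, the vertex j is a fill-in neighbor of m; consequently n_{L,m} = M − m + 1 for every m ≥ v. -/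
/-- `n_{L,m}`: the number of fill-in neighbors `j` of `m` with `m ≤ j ≤ M`. -/
noncomputable def nLrow (G : SimpleGraph ℕ) (M m : ℕ) : ℕ :=
  Nat.card {j : ℕ // m ≤ j ∧ j ≤ M ∧ FillIn G m j}

/-- Key step in Proposition 2(a): if some vertex `v` of the graph `G` on `{1,…,M}` is
adjacent to every other vertex, then for every `m ≥ v` every `j` with `m < j ≤ M` is a
fill-in neighbor of `m`; consequently `n_{L,m} = M - m + 1` for every `m ≥ v`. -/
theorem stmt_12 (M : ℕ) (G : SimpleGraph ℕ) (v : ℕ) (hv : v ∈ Finset.Icc 1 M)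
    (hadj : ∀ w ∈ Finset.Icc 1 M, w ≠ v → G.Adj v w) :
    (∀ m, v ≤ m → m ≤ M → ∀ j, m < j → j ≤ M → FillIn G m j)
    ∧ (∀ m, v ≤ m → m ≤ M → nLrow G M m = M - m + 1) := by
  simp only [Finset.mem_Icc] at hv hadj
  have key : ∀ m, v ≤ m → m ≤ M → ∀ j, m < j → j ≤ M → FillIn G m j := by
    intro m hvm hmM j hmj hjM
    right
    rcases eq_or_lt_of_le hvm with heq | hlt
    · subst heq
      have hadjmj : G.Adj v j := hadj j ⟨by omega, hjM⟩ (by omega)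
      exact ⟨hadjmj.toWalk, by
        intro x hx
        simp [SimpleGraph.Walk.support] at hx
        tauto⟩
    · have h1 : G.Adj m v := (hadj m ⟨by omega, hmM⟩ (by omega)).symm
      have h2 : G.Adj v j := hadj j ⟨by omega, hjM⟩ (by omega)
      refine ⟨h1.toWalk.append h2.toWalk, ?_⟩
      intro x hx
      simp [SimpleGraph.Walk.support_append, SimpleGraph.Walk.support] at hx
      rcases hx with rfl | rfl | rfl
      · tauto
      · right; right; exact hlt
      · tauto
  refine ⟨key, fun m hvm hmM => ?_⟩
  have hset : ∀ j : ℕ, (m ≤ j ∧ j ≤ M ∧ FillIn G m j) ↔ j ∈ Set.Icc m M := by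
    intro j
    constructor
    · rintro ⟨h1, h2, _⟩; exact ⟨h1, h2⟩
    · rintro ⟨h1, h2⟩
      refine ⟨h1, h2, ?_⟩
      rcases eq_or_lt_of_le h1 with rfl | h
      · left; rfl
      · exact key m hvm hmM j h h2
  have : nLrow G M m = Nat.card (Set.Icc m M) := by
    unfold nLrow
    exact Nat.card_congr (Equiv.subtypeEquivRight hset)
  rw [this, Nat.card_coe_set_eq, Set.ncard_eq_toFinset_card', Set.toFinset_Icc, Nat.card_Icc]
  omega
end

section
/- Let G be a simple graph on the vertex set {1,…,M} with its natural linear order, and suppose every vertex has at most one neighbor with strictly larger index. Then for all m < j, the vertex j is a fill-in neighbor of m if and only if m and j are adjacent in G; consequently n_L = n_Q, where n_Q is the number of pairs (m,j) with m ≤ j such that j = m or m and j are adjacent. -/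
private lemma descend (G : SimpleGraph ℕ)
    (hone : ∀ a b c : ℕ, a < b → a < c → G.Adj a b → G.Adj a c → b = c) (m : ℕ) :
    ∀ (a j : ℕ) (w : G.Walk a j) (u : ℕ), m < j → w.IsPath →
      (∀ x ∈ w.support, x = j ∨ x < m) → a < m → a < u → G.Adj a u → u ≠ j →
      u ∉ w.support → False := by
  intro a j w
  induction w with
  | nil => intro u hmj _ hsup ham; omega
  | @cons a c j h p ih =>
    intro u hmj hpath hsup ham hau hadj hunej hunotin
    have hcmem : c ∈ (SimpleGraph.Walk.cons h p).support := by
      simp [SimpleGraph.Walk.support_cons]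
    have hc : c = j ∨ c < m := hsup c hcmem
    rcases hc with rfl | hcm
    · exact hunej (hone a c u (lt_trans ham hmj) hau h hadj).symm
    · rcases lt_trichotomy a c with hac | hac | hac
      · exact hunotin ((hone a c u hac hau h hadj) ▸ hcmem)
      · exact h.ne hac
      · have hp : p.IsPath ∧ a ∉ p.support :=
          (SimpleGraph.Walk.cons_isPath_iff h p).mp hpath
        exact ih a hmj hp.1
          (fun x hx => hsup x (by simp [SimpleGraph.Walk.support_cons, hx]))
          hcm hac h.symm (by omega) hp.2

private lemma fillin_iff_adj (G : SimpleGraph ℕ)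
    (hone : ∀ a b c : ℕ, a < b → a < c → G.Adj a b → G.Adj a c → b = c)
    (m j : ℕ) (hmj : m < j) : FillIn G m j ↔ G.Adj m j := by
  constructor
  · rintro (rfl | ⟨w, hw⟩)
    · omega
    · have hne : m ≠ j := hmj.ne
      set wp : G.Walk m j := (w.toPath : G.Path m j).val with hwp
      have hpath : wp.IsPath := (w.toPath).2
      have hsub : wp.support ⊆ w.support := SimpleGraph.Walk.support_toPath_subset w
      obtain ⟨c, h, rest, hrest⟩ := SimpleGraph.Walk.exists_eq_cons_of_ne hne wp
      have hpath' : rest.IsPath ∧ m ∉ rest.support := by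
        rw [hrest] at hpath
        exact (SimpleGraph.Walk.cons_isPath_iff h rest).mp hpath
      have hcsup : ∀ x ∈ rest.support, x = m ∨ x = j ∨ x < m := by
        intro x hx
        exact hw x (hsub (by rw [hrest]; simp [SimpleGraph.Walk.support_cons, hx]))
      rcases hw c (hsub (by rw [hrest]; simp [SimpleGraph.Walk.support_cons])) with
        rfl | rfl | hcm
      · exact absurd rfl h.ne
      · exact h
      · exact (descend G hone m c j rest m hmj hpath'.1
          (fun x hx => by
            rcases hcsup x hx with rfl | hxx | hxx
            · exact absurd hx hpath'.2
            · exact Or.inl hxx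
            · exact Or.inr hxx)
          hcm hcm h.symm hne hpath'.2).elim
  · intro hadj
    right
    refine ⟨SimpleGraph.Walk.cons hadj SimpleGraph.Walk.nil, ?_⟩
    intro v hv
    simp [SimpleGraph.Walk.support_cons] at hv
    tauto

/-- No fill-in for tree-like orderings (depth-last ordering of nested multilevel models):
if every vertex of `G` has at most one neighbor with strictly larger index, then for all
`m < j` the vertex `j` is a fill-in neighbor of `m` iff `m` and `j` are adjacent;
consequently `n_L = n_Q`, where `n_Q` counts the pairs `(m,j)` with `m ≤ j` such that
`j = m` or `m` and `j` are adjacent. -/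
theorem stmt_14 (M : ℕ) (G : SimpleGraph ℕ)
    (hone : ∀ a b c : ℕ, a < b → a < c → G.Adj a b → G.Adj a c → b = c) :
    (∀ m j, m < j → (FillIn G m j ↔ G.Adj m j))
    ∧ ∑ m ∈ Finset.Icc 1 M, nLrow G M m
        = ∑ m ∈ Finset.Icc 1 M,
            Nat.card {j : ℕ // m ≤ j ∧ j ≤ M ∧ (j = m ∨ G.Adj m j)} := by
  refine ⟨fun m j hmj => fillin_iff_adj G hone m j hmj, ?_⟩
  refine Finset.sum_congr rfl (fun m _ => ?_)
  unfold nLrow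
  have hkey : ∀ j : ℕ, (m ≤ j ∧ j ≤ M ∧ FillIn G m j) ↔
      (m ≤ j ∧ j ≤ M ∧ (j = m ∨ G.Adj m j)) := by
    intro j
    constructor
    · rintro ⟨h1, h2, h3⟩
      rcases eq_or_lt_of_le h1 with rfl | hlt
      · exact ⟨h1, h2, Or.inl rfl⟩
      · exact ⟨h1, h2, Or.inr ((fillin_iff_adj G hone m j hlt).mp h3)⟩
    · rintro ⟨h1, h2, (rfl | h3)⟩
      · exact ⟨h1, h2, Or.inl rfl⟩
      · rcases eq_or_lt_of_le h1 with rfl | hlt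
        · exact absurd h3 (G.irrefl)
        · exact ⟨h1, h2, (fillin_iff_adj G hone m j hlt).mpr h3⟩
  congr 1
  exact congrArg _ (funext fun j => propext (hkey j))
end

section
/- Fix integers I and d with d even, 0 < d < I. Let G be the simple graph on the vertex set {1,…,2I+1} in which: vertex 2I+1 is adjacent to every other vertex; for 1 ≤ i ≤ I and 1 ≤ j ≤ I, vertex i is adjacent to vertex I+j if and only if min((i−j) mod I, (j−i) mod I) ≤ d/2; and there are no other edges. Then n_{L,m} ≤ 2(d+1) for every m ∈ {1,…,2I+1}, and hence n_L ≤ 2(d+1)(2I+1). -/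
/-- The conditional independence graph of the circulant two-factor crossed effects design
on the vertices `{1,…,2I+1}`: vertex `2I+1` (the intercept) is adjacent to every other
vertex, and for `1 ≤ i ≤ I`, `1 ≤ j ≤ I`, vertex `i` is adjacent to vertex `I+j` iff
`min((i-j) mod I, (j-i) mod I) ≤ d/2`; there are no other edges. -/
def circGraph (I d : ℕ) : SimpleGraph ℕ :=
  SimpleGraph.fromRel (fun a b =>
    (a ∈ Finset.Icc 1 (2 * I) ∧ b = 2 * I + 1) ∨
    (∃ i ∈ Finset.Icc 1 I, ∃ j ∈ Finset.Icc 1 I, a = i ∧ b = I + j ∧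
      min (((i : ℤ) - (j : ℤ)) % (I : ℤ)) (((j : ℤ) - (i : ℤ)) % (I : ℤ)) ≤ (d : ℤ) / 2))

def Dd (I d i j : ℕ) : Prop :=
  min (((i : ℤ) - (j : ℤ)) % (I : ℤ)) (((j : ℤ) - (i : ℤ)) % (I : ℤ)) ≤ (d : ℤ) / 2

lemma Dd_symm {I d i j : ℕ} (h : Dd I d i j) : Dd I d j i := by
  unfold Dd at h ⊢; rw [min_comm]; exact h

lemma emod_eq_of_Icc {I : ℕ} (hI : 0 < I) {a b : ℕ} (ha : 1 ≤ a) (ha' : a ≤ I)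
    (hb : 1 ≤ b) (hb' : b ≤ I) :
    ((a : ℤ) - b) % (I : ℤ) = if b ≤ a then (a : ℤ) - b else (a : ℤ) - b + I := by
  split_ifs with h
  · apply Int.emod_eq_of_lt <;> omega
  · have h2 : ((a:ℤ) - b) % I = ((a:ℤ) - b + I) % I := by
      conv_lhs => rw [show (a:ℤ) - b = ((a:ℤ) - b + I) + (I : ℤ) * (-1) from by ring]
      rw [Int.add_mul_emod_self_left]
    rw [h2]
    apply Int.emod_eq_of_lt <;> omega

lemma Dd_arith {I d : ℕ} (hI : 0 < I) {i j : ℕ} (hi : 1 ≤ i) (hi' : i ≤ I)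
    (hj : 1 ≤ j) (hj' : j ≤ I) (h : Dd I d i j) :
    ((j:ℤ) ≤ i ∧ 2*((i:ℤ)-j) ≤ d) ∨ ((i:ℤ) ≤ j ∧ 2*((j:ℤ)-i) ≤ d) ∨
    ((i:ℤ) ≤ j ∧ 2*((i:ℤ)-j+I) ≤ d) ∨ ((j:ℤ) ≤ i ∧ 2*((j:ℤ)-i+I) ≤ d) := by
  unfold Dd at h
  rw [min_le_iff, emod_eq_of_Icc hI hi hi' hj hj', emod_eq_of_Icc hI hj hj' hi hi'] at h
  split_ifs at h <;> omega

lemma adj_cases {I d a b : ℕ} (h : (circGraph I d).Adj a b) :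
    a ≠ b ∧ ((1 ≤ a ∧ a ≤ 2*I ∧ b = 2*I+1) ∨ (1 ≤ b ∧ b ≤ 2*I ∧ a = 2*I+1) ∨
      (∃ i j, 1 ≤ i ∧ i ≤ I ∧ 1 ≤ j ∧ j ≤ I ∧ Dd I d i j ∧
        ((a = i ∧ b = I + j) ∨ (b = i ∧ a = I + j)))) := by
  rw [circGraph, SimpleGraph.fromRel_adj] at h
  obtain ⟨hne, h⟩ := h
  refine ⟨hne, ?_⟩
  simp only [Finset.mem_Icc] at h
  rcases h with (⟨⟨h1,h2⟩,h3⟩ | ⟨i, ⟨hi1,hi2⟩, j, ⟨hj1,hj2⟩, ha, hb, hD⟩) |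
    (⟨⟨h1,h2⟩,h3⟩ | ⟨i, ⟨hi1,hi2⟩, j, ⟨hj1,hj2⟩, ha, hb, hD⟩)
  · exact Or.inl ⟨h1, h2, h3⟩
  · exact Or.inr (Or.inr ⟨i, j, hi1, hi2, hj1, hj2, hD, Or.inl ⟨ha, hb⟩⟩)
  · exact Or.inr (Or.inl ⟨h1, h2, h3⟩)
  · exact Or.inr (Or.inr ⟨i, j, hi1, hi2, hj1, hj2, hD, Or.inr ⟨ha, hb⟩⟩)

lemma walk_bound {I d : ℕ} (hd0 : 0 < d) (hdI : d < I) (k l : ℕ)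
    (hk1 : 1 ≤ k) (hkI : k ≤ I) (hl : k < l) (hlI : l ≤ I) :
    ∀ (x z : ℕ) (w : (circGraph I d).Walk x z), z = I + l →
      (∀ v ∈ w.support, v = I + k ∨ v = I + l ∨ v < I + k) →
      ((∃ q, 1 ≤ q ∧ q ≤ k ∧ x = I + q) ∨
       (1 ≤ x ∧ x ≤ I ∧ ∃ q, 1 ≤ q ∧ q ≤ k ∧ Dd I d q x)) →
      l ≤ k + d ∨ I + 1 ≤ l + d := by
  have hI : 0 < I := by omega
  intro x z w
  induction w with
  | nil =>
    rintro rfl hsup hgood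
    rcases hgood with ⟨q, h1, h2, h3⟩ | ⟨h1, h2, _⟩ <;> omega
  | @cons a b c hadj p ih =>
    rintro rfl hsup hgood
    have hsup' : ∀ v ∈ p.support, v = I + k ∨ v = I + l ∨ v < I + k := by
      intro v hv
      exact hsup v (by rw [SimpleGraph.Walk.support_cons]; exact List.mem_cons_of_mem _ hv)
    by_cases hb : b = I + l
    · -- a is adjacent to the endpoint I + l
      subst hb
      obtain ⟨hne, hcase⟩ := adj_cases hadj
      rcases hgood with ⟨q, hq1, hq2, rfl⟩ | ⟨ha1, ha2, q, hq1, hq2, hD1⟩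
      · rcases hcase with ⟨_, _, h3⟩ | ⟨_, _, h3⟩ |
          ⟨i, j, hi1, hi2, hj1, hj2, hD, ⟨h1, h2⟩ | ⟨h1, h2⟩⟩ <;> omega
      · rcases hcase with ⟨_, _, h3⟩ | ⟨_, _, h3⟩ |
          ⟨i, j, hi1, hi2, hj1, hj2, hD, ⟨h1, h2⟩ | ⟨h1, h2⟩⟩
        · omega
        · omega
        · -- a = i, I + l = I + j, so j = l
          have hjl : j = l := by omega
          subst hjl
          subst h1
          have A1 := Dd_arith hI hq1 (by omega) ha1 ha2 hD1
          have A2 := Dd_arith hI ha1 ha2 hj1 hj2 hD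
          omega
        · omega
    · have hb' := hsup' b p.start_mem_support
      apply ih rfl hsup'
      rcases hb' with rfl | hb2 | hblt
      · exact Or.inl ⟨k, hk1, le_refl k, rfl⟩
      · exact absurd hb2 hb
      · obtain ⟨hne, hcase⟩ := adj_cases hadj
        rcases hgood with ⟨q, hq1, hq2, rfl⟩ | ⟨ha1, ha2, q, hq1, hq2, hD1⟩
        · rcases hcase with ⟨_, _, h3⟩ | ⟨_, _, h3⟩ |
            ⟨i, j, hi1, hi2, hj1, hj2, hD, ⟨h1, h2⟩ | ⟨h1, h2⟩⟩
          · exact absurd h3 (by omega)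
          · exact absurd h3 (by omega)
          · exact absurd h1 (by omega)
          · -- b = i, I + q = I + j : b is first-factor, within d/2 of q
            subst h1
            exact Or.inr ⟨hi1, hi2, j, hj1, by omega, Dd_symm hD⟩
        · rcases hcase with ⟨_, _, h3⟩ | ⟨_, _, h3⟩ |
            ⟨i, j, hi1, hi2, hj1, hj2, hD, ⟨h1, h2⟩ | ⟨h1, h2⟩⟩
          · exact absurd h3 (by omega)
          · exact absurd h3 (by omega)
          · -- a = i, b = I + j with j < k
            exact Or.inl ⟨j, hj1, by omega, h2⟩
          · exact absurd h2 (by omega)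

lemma fillin_low {I d m j : ℕ} (hm1 : 1 ≤ m) (hmI : m ≤ I)
    (h : FillIn (circGraph I d) m j) : j = m ∨ (circGraph I d).Adj m j := by
  rcases h with h | ⟨w, hw⟩
  · exact Or.inl h
  cases w with
  | nil => exact Or.inl rfl
  | @cons _ y _ hadj p =>
    right
    have hy := hw y (by
      rw [SimpleGraph.Walk.support_cons]
      exact List.mem_cons_of_mem _ p.start_mem_support)
    obtain ⟨hne, hcase⟩ := adj_cases hadj
    rcases hy with rfl | rfl | hlt
    · exact absurd rfl hne
    · exact hadj
    · exfalso
      rcases hcase with ⟨_, _, h3⟩ | ⟨_, _, h3⟩ |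
        ⟨i, j', hi1, hi2, hj1, hj2, _, ⟨h1, h2⟩ | ⟨h1, h2⟩⟩ <;> omega

lemma fillin_high {I d k l : ℕ} (hd0 : 0 < d) (hdI : d < I) (hk1 : 1 ≤ k) (hkI : k ≤ I)
    (hl : k < l) (hlI : l ≤ I) (h : FillIn (circGraph I d) (I + k) (I + l)) :
    l ≤ k + d ∨ I + 1 ≤ l + d := by
  rcases h with h | ⟨w, hw⟩
  · omega
  · exact walk_bound hd0 hdI k l hk1 hkI hl hlI (I + k) (I + l) w rfl hw
      (Or.inl ⟨k, hk1, le_refl k, rfl⟩)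

lemma nLrow_le {G : SimpleGraph ℕ} {M m : ℕ} (S : Finset ℕ)
    (hS : ∀ j, m ≤ j → j ≤ M → FillIn G m j → j ∈ S) : nLrow G M m ≤ S.card := by
  rw [nLrow]
  have h1 : Nat.card {j : ℕ // m ≤ j ∧ j ≤ M ∧ FillIn G m j}
      = Set.ncard {j : ℕ | m ≤ j ∧ j ≤ M ∧ FillIn G m j} :=
    Nat.card_coe_set_eq _
  rw [h1]
  calc Set.ncard {j : ℕ | m ≤ j ∧ j ≤ M ∧ FillIn G m j}
      ≤ Set.ncard (S : Set ℕ) :=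
        Set.ncard_le_ncard (fun j hj => hS j hj.1 hj.2.1 hj.2.2) S.finite_toSet
    _ = S.card := Set.ncard_coe_finset S

lemma row_low {I d : ℕ} (hEven : Even d) (hd0 : 0 < d) (hdI : d < I) {m : ℕ}
    (hm1 : 1 ≤ m) (hmI : m ≤ I) :
    nLrow (circGraph I d) (2 * I + 1) m ≤ 2 * (d + 1) := by
  obtain ⟨e, he⟩ := hEven
  have hI : 0 < I := by omega
  set A : Finset ℕ := Finset.Icc (max (m - d/2) 1) (min (m + d/2) I) with hA
  set B : Finset ℕ := Finset.Icc (max (I + m - d/2) 1) I with hB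
  set C : Finset ℕ := Finset.Icc 1 (m + d/2 - I) with hC
  set S : Finset ℕ := {m, 2*I+1} ∪ (A ∪ B ∪ C).image (fun l => I + l) with hSdef
  have hmem : ∀ j, m ≤ j → j ≤ 2*I+1 → FillIn (circGraph I d) m j → j ∈ S := by
    intro j hj1 hj2 hf
    rcases fillin_low hm1 hmI hf with rfl | hadj
    · simp [hSdef]
    · obtain ⟨hne, hcase⟩ := adj_cases hadj
      rcases hcase with ⟨_, _, h3⟩ | ⟨_, _, h3⟩ |
        ⟨i, l, hi1, hi2, hl1, hl2, hD, ⟨h1, h2⟩ | ⟨h1, h2⟩⟩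
      · subst h3; simp [hSdef]
      · omega
      · -- m = i, j = I + l
        subst h1
        have hDa := Dd_arith hI hi1 hi2 hl1 hl2 hD
        have hmemI : l ∈ A ∪ B ∪ C := by
          simp only [hA, hB, hC, Finset.mem_union, Finset.mem_Icc]
          omega
        apply Finset.mem_union_right
        exact Finset.mem_image.mpr ⟨l, hmemI, h2.symm⟩
      · omega
  calc nLrow (circGraph I d) (2 * I + 1) m ≤ S.card := nLrow_le S hmem
    _ ≤ ({m, 2*I+1} : Finset ℕ).card + ((A ∪ B ∪ C).image (fun l => I + l)).card :=
        Finset.card_union_le _ _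
    _ ≤ 2 + (A ∪ B ∪ C).card := by
        have h1 : ({m, 2*I+1} : Finset ℕ).card ≤ 2 :=
          (Finset.card_insert_le _ _).trans (by simp)
        have h2 := Finset.card_image_le (s := A ∪ B ∪ C) (f := fun l => I + l)
        omega
    _ ≤ 2 + (A.card + B.card + C.card) := by
        have h1 : (A ∪ B ∪ C).card ≤ (A ∪ B).card + C.card := Finset.card_union_le _ _
        have h2 : (A ∪ B).card ≤ A.card + B.card := Finset.card_union_le _ _
        omega
    _ ≤ 2 * (d + 1) := by
        simp only [hA, hB, hC, Nat.card_Icc]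
        omega

lemma row_high {I d : ℕ} (hd0 : 0 < d) (hdI : d < I) {k : ℕ}
    (hk1 : 1 ≤ k) (hkI : k ≤ I) :
    nLrow (circGraph I d) (2 * I + 1) (I + k) ≤ 2 * (d + 1) := by
  set A : Finset ℕ := Finset.Icc (k + 1) (min (k + d) I) with hA
  set B : Finset ℕ := Finset.Icc (max (I + 1 - d) (k + 1)) I with hB
  set S : Finset ℕ := {I + k, 2*I+1} ∪ (A ∪ B).image (fun l => I + l) with hSdef
  have hmem : ∀ j, I + k ≤ j → j ≤ 2*I+1 → FillIn (circGraph I d) (I + k) j → j ∈ S := by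
    intro j hj1 hj2 hf
    by_cases hjm : j = I + k
    · simp [hSdef, hjm]
    by_cases hjM : j = 2*I+1
    · simp [hSdef, hjM]
    obtain ⟨l, rfl, hl1, hl2⟩ : ∃ l, j = I + l ∧ k < l ∧ l ≤ I := ⟨j - I, by omega⟩
    have hb := fillin_high hd0 hdI hk1 hkI hl1 hl2 hf
    have hmemI : l ∈ A ∪ B := by
      simp only [hA, hB, Finset.mem_union, Finset.mem_Icc]
      omega
    apply Finset.mem_union_right
    exact Finset.mem_image.mpr ⟨l, hmemI, rfl⟩
  calc nLrow (circGraph I d) (2 * I + 1) (I + k) ≤ S.card := nLrow_le S hmem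
    _ ≤ ({I + k, 2*I+1} : Finset ℕ).card + ((A ∪ B).image (fun l => I + l)).card :=
        Finset.card_union_le _ _
    _ ≤ 2 + (A.card + B.card) := by
        have h1 : ({I + k, 2*I+1} : Finset ℕ).card ≤ 2 :=
          (Finset.card_insert_le _ _).trans (by simp)
        have h2 := Finset.card_image_le (s := A ∪ B) (f := fun l => I + l)
        have h3 : (A ∪ B).card ≤ A.card + B.card := Finset.card_union_le _ _
        omega
    _ ≤ 2 * (d + 1) := by
        simp only [hA, hB, Nat.card_Icc]
        omega

lemma row_top {I d : ℕ} : nLrow (circGraph I d) (2 * I + 1) (2 * I + 1) ≤ 2 * (d + 1) := by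
  have h : nLrow (circGraph I d) (2 * I + 1) (2 * I + 1) ≤ ({2*I+1} : Finset ℕ).card := by
    apply nLrow_le
    intro j hj1 hj2 _
    simp only [Finset.mem_singleton]
    omega
  simp only [Finset.card_singleton] at h
  omega

/-- Key fill-in bound in Proposition 4 (favourable circulant design): for the circulant
crossed effects graph with even `0 < d < I`, every row fill-in count satisfies
`n_{L,m} ≤ 2(d+1)`, and hence `n_L ≤ 2(d+1)(2I+1)`. -/
theorem stmt_15 (I d : ℕ) (hEven : Even d) (hd0 : 0 < d) (hdI : d < I) :
    (∀ m ∈ Finset.Icc 1 (2 * I + 1), nLrow (circGraph I d) (2 * I + 1) m ≤ 2 * (d + 1))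
    ∧ ∑ m ∈ Finset.Icc 1 (2 * I + 1), nLrow (circGraph I d) (2 * I + 1) m
        ≤ 2 * (d + 1) * (2 * I + 1) := by
  have part1 : ∀ m ∈ Finset.Icc 1 (2 * I + 1),
      nLrow (circGraph I d) (2 * I + 1) m ≤ 2 * (d + 1) := by
    intro m hm
    rw [Finset.mem_Icc] at hm
    rcases lt_or_ge I m with hge | hle
    · rcases Nat.lt_or_ge m (2*I+1) with hlt | hge2
      · obtain ⟨k, rfl, hk1, hk2⟩ : ∃ k, m = I + k ∧ 1 ≤ k ∧ k ≤ I := ⟨m - I, by omega⟩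
        exact row_high hd0 hdI hk1 hk2
      · have : m = 2*I+1 := by omega
        subst this
        exact row_top
    · exact row_low hEven hd0 hdI hm.1 hle
  refine ⟨part1, ?_⟩
  calc ∑ m ∈ Finset.Icc 1 (2 * I + 1), nLrow (circGraph I d) (2 * I + 1) m
      ≤ ∑ _m ∈ Finset.Icc 1 (2 * I + 1), 2 * (d + 1) := Finset.sum_le_sum part1
    _ = (2 * I + 1) * (2 * (d + 1)) := by
        rw [Finset.sum_const, Nat.card_Icc, smul_eq_mul]
        congr 1
    _ = 2 * (d + 1) * (2 * I + 1) := Nat.mul_comm _ _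
end

section
/- Fix integers I and d with d even, 0 < d < I. Let G be the simple graph on the vertex set {1,…,2I+1} in which: vertex 2I+1 is adjacent to every other vertex; for 1 ≤ i ≤ I and 1 ≤ j ≤ I, vertex i is adjacent to vertex I+j if and only if min((i−j) mod I, (j−i) mod I) ≤ d/2; and there are no other edges. Let n_Q = Σ_{m=1}^{2I+1} n_{Q,m}, where n_{Q,m} is the number of vertices j (over the full range 1 ≤ j ≤ 2I+1) with j = m or j adjacent to m. Then n_Q = 1 + 6I + 2(d+1)I, and n_L ≤ 3·n_Q. -/
/-- `n_{Q,m}`: the number of vertices `j` in the full range `1 ≤ j ≤ M` with `j = m` or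
`j` adjacent to `m`. -/
noncomputable def nQrow (G : SimpleGraph ℕ) (M m : ℕ) : ℕ :=
  Nat.card {j : ℕ // 1 ≤ j ∧ j ≤ M ∧ (j = m ∨ G.Adj m j)}

namespace Stmt16Aux


lemma sub_emod_self (x n : ℤ) : (x - x % n) % n = 0 := by
  rw [Int.sub_emod, Int.emod_emod_of_dvd _ dvd_rfl, sub_self, Int.zero_emod]

lemma dvd_sub_emod (x n : ℤ) : n ∣ (x - x % n) := Int.dvd_of_emod_eq_zero (sub_emod_self x n)

lemma emod_eq_emod_of_sub {n x y : ℤ} (h : (x - y) % n = 0) : x % n = y % n := by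
  have hd : n ∣ x - y := Int.dvd_of_emod_eq_zero h
  have : y ≡ x [ZMOD n] := Int.modEq_iff_dvd.mpr hd
  exact this.symm

lemma emod_le_self {n v : ℤ} (hn : 0 < n) (hv : 0 ≤ v) : v % n ≤ v := by
  rcases lt_or_ge v n with h | h
  · rw [Int.emod_eq_of_lt hv h]
  · exact le_trans (le_of_lt (Int.emod_lt_of_pos v hn)) h

lemma min_emod_le {n : ℤ} (hn : 0 < n) {u v : ℤ} (h : (u - v) % n = 0) :
    min (u % n) ((-u) % n) ≤ |v| := by
  rcases le_or_gt 0 v with hv | hv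
  · have h1 : u % n = v % n := emod_eq_emod_of_sub h
    calc min (u % n) ((-u) % n) ≤ u % n := min_le_left _ _
      _ = v % n := h1
      _ ≤ v := emod_le_self hn hv
      _ = |v| := (abs_of_nonneg hv).symm
  · have hd : n ∣ (u - v) := Int.dvd_of_emod_eq_zero h
    have hd2 : n ∣ (-u - -v) := by
      rw [show -u - -v = -(u - v) by ring]; exact (dvd_neg).mpr hd
    have h2 : (-u) % n = (-v) % n := emod_eq_emod_of_sub (Int.emod_eq_zero_of_dvd hd2)
    calc min (u % n) ((-u) % n) ≤ (-u) % n := min_le_right _ _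
      _ = (-v) % n := h2
      _ ≤ -v := emod_le_self hn (by omega)
      _ = |v| := (abs_of_neg hv).symm

lemma exists_repr {n : ℤ} (hn : 0 < n) (u : ℤ) :
    ∃ v : ℤ, (u - v) % n = 0 ∧ |v| = min (u % n) ((-u) % n) := by
  rcases le_total (u % n) ((-u) % n) with h | h
  · refine ⟨u % n, sub_emod_self u n, ?_⟩
    rw [abs_of_nonneg (Int.emod_nonneg u (ne_of_gt hn)), min_eq_left h]
  · refine ⟨-((-u) % n), ?_, ?_⟩
    · rw [show u - -((-u) % n) = -(-u - (-u) % n) by ring]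
      exact Int.emod_eq_zero_of_dvd ((dvd_neg).mpr (dvd_sub_emod (-u) n))
    · rw [abs_neg, abs_of_nonneg (Int.emod_nonneg _ (ne_of_gt hn)), min_eq_right h]

lemma min_triangle {n : ℤ} (hn : 0 < n) (x y z e : ℤ)
    (h1 : min ((x - y) % n) ((y - x) % n) ≤ e)
    (h2 : min ((y - z) % n) ((z - y) % n) ≤ e) :
    min ((x - z) % n) ((z - x) % n) ≤ 2 * e := by
  obtain ⟨v1, hv1, hv1e⟩ := exists_repr hn (x - y)
  obtain ⟨v2, hv2, hv2e⟩ := exists_repr hn (y - z)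
  rw [neg_sub] at hv1e hv2e
  have hsum : ((x - z) - (v1 + v2)) % n = 0 := by
    have d1 : n ∣ (x - y - v1) := Int.dvd_of_emod_eq_zero hv1
    have d2 : n ∣ (y - z - v2) := Int.dvd_of_emod_eq_zero hv2
    have : n ∣ ((x - z) - (v1 + v2)) := by
      rw [show (x - z) - (v1 + v2) = (x - y - v1) + (y - z - v2) by ring]
      exact dvd_add d1 d2
    exact Int.emod_eq_zero_of_dvd this
  have hle := min_emod_le hn hsum
  rw [neg_sub] at hle
  calc min ((x - z) % n) ((z - x) % n) ≤ |v1 + v2| := hle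
    _ ≤ |v1| + |v2| := abs_add_le _ _
    _ ≤ e + e := add_le_add (le_of_eq_of_le hv1e h1) (le_of_eq_of_le hv2e h2)
    _ = 2 * e := by ring



/-- cross adjacency: `a` is a factor-A vertex, `b = I + c` a factor-B vertex in window. -/
def AB (I d a b : ℕ) : Prop :=
  1 ≤ a ∧ a ≤ I ∧ ∃ c : ℕ, 1 ≤ c ∧ c ≤ I ∧ b = I + c ∧
    min (((a : ℤ) - (c : ℤ)) % (I : ℤ)) (((c : ℤ) - (a : ℤ)) % (I : ℤ)) ≤ (d : ℤ) / 2

lemma adj_iff (I d a b : ℕ) :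
    (circGraph I d).Adj a b ↔
      ((b = 2*I+1 ∧ 1 ≤ a ∧ a ≤ 2*I) ∨ (a = 2*I+1 ∧ 1 ≤ b ∧ b ≤ 2*I) ∨
        AB I d a b ∨ AB I d b a) := by
  rw [circGraph, SimpleGraph.fromRel_adj]
  simp only [Finset.mem_Icc]
  unfold AB
  constructor
  · rintro ⟨hne, hc | hc⟩
    · rcases hc with ⟨⟨h1, h2⟩, h3⟩ | ⟨i, ⟨hi1, hi2⟩, c, ⟨hc1, hc2⟩, rfl, rfl, hmin⟩
      · exact Or.inl ⟨h3, h1, h2⟩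
      · exact Or.inr (Or.inr (Or.inl ⟨hi1, hi2, c, hc1, hc2, rfl, hmin⟩))
    · rcases hc with ⟨⟨h1, h2⟩, h3⟩ | ⟨i, ⟨hi1, hi2⟩, c, ⟨hc1, hc2⟩, rfl, rfl, hmin⟩
      · exact Or.inr (Or.inl ⟨h3, h1, h2⟩)
      · exact Or.inr (Or.inr (Or.inr ⟨hi1, hi2, c, hc1, hc2, rfl, hmin⟩))
  · rintro (⟨rfl, h1, h2⟩ | ⟨rfl, h1, h2⟩ | ⟨h1, h2, c, hc1, hc2, rfl, hmin⟩ |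
      ⟨h1, h2, c, hc1, hc2, rfl, hmin⟩)
    · exact ⟨by omega, Or.inl (Or.inl ⟨⟨h1, h2⟩, rfl⟩)⟩
    · exact ⟨by omega, Or.inr (Or.inl ⟨⟨h1, h2⟩, rfl⟩)⟩
    · exact ⟨by omega, Or.inl (Or.inr ⟨a, ⟨h1, h2⟩, c, ⟨hc1, hc2⟩, rfl, rfl, hmin⟩)⟩
    · exact ⟨by omega, Or.inr (Or.inr ⟨b, ⟨h1, h2⟩, c, ⟨hc1, hc2⟩, rfl, rfl, hmin⟩)⟩

/-- window of factor-B indices adjacent to vertex `a`. -/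
def Wd (I d a : ℕ) : Finset ℕ :=
  (Finset.Icc 1 I).filter
    (fun b => min (((a : ℤ) - (b : ℤ)) % (I : ℤ)) (((b : ℤ) - (a : ℤ)) % (I : ℤ)) ≤ (d : ℤ) / 2)


lemma Wd_card (I d a : ℕ) (hd0 : 0 < d) (hdI : d < I) (hEven : Even d)
    (ha1 : 1 ≤ a) (ha2 : a ≤ I) : (Wd I d a).card = d + 1 := by
  have hIpos : 0 < I := lt_trans hd0 hdI
  have hI : (0:ℤ) < (I:ℤ) := by exact_mod_cast hIpos
  have h2e : 2 * ((d:ℤ)/2) = (d:ℤ) := by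
    obtain ⟨t, ht⟩ := hEven; subst ht; push_cast; omega
  set g : ℕ → ℕ := fun t => (((a : ℤ) - 1 - (d:ℤ)/2 + (t:ℤ)) % (I:ℤ)).toNat + 1 with hg
  have hgmem : ∀ t ∈ Finset.range (d+1), g t ∈ Wd I d a := by
    intro t ht
    simp only [Finset.mem_range] at ht
    set r : ℤ := ((a : ℤ) - 1 - (d:ℤ)/2 + (t:ℤ)) % (I:ℤ) with hr
    have hr0 : 0 ≤ r := Int.emod_nonneg _ (ne_of_gt hI)
    have hrI : r < (I:ℤ) := Int.emod_lt_of_pos _ hI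
    have hgcast : ((g t : ℕ) : ℤ) = r + 1 := by
      simp only [hg]; rw [← hr]; push_cast [Int.toNat_of_nonneg hr0]; ring
    simp only [Wd, Finset.mem_filter, Finset.mem_Icc]
    refine ⟨⟨by simp [hg], by omega⟩, ?_⟩
    have hzero : (((a:ℤ) - (g t : ℕ)) - ((d:ℤ)/2 - t)) % (I:ℤ) = 0 := by
      rw [show ((a:ℤ) - ((g t : ℕ):ℤ)) - ((d:ℤ)/2 - (t:ℤ))
          = (((a:ℤ) - 1 - (d:ℤ)/2 + t) - r) - (((g t : ℕ):ℤ) - (r + 1)) by ring]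
      rw [hgcast, sub_self, sub_zero, hr]
      exact sub_emod_self _ _
    have hle := min_emod_le hI hzero
    rw [neg_sub] at hle
    have habs : |(d:ℤ)/2 - t| ≤ (d:ℤ)/2 := by rw [abs_le]; omega
    exact le_trans hle habs
  have hsurj : ∀ b ∈ Wd I d a, ∃ t ∈ Finset.range (d+1), g t = b := by
    intro b hb
    simp only [Wd, Finset.mem_filter, Finset.mem_Icc] at hb
    obtain ⟨⟨hb1, hb2⟩, hmin⟩ := hb
    rcases min_le_iff.mp hmin with hx | hy
    · -- ((a - b) % I) ≤ d/2 ; take t = d/2 - s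
      set s : ℤ := ((a:ℤ) - (b:ℤ)) % (I:ℤ) with hs
      have hs0 : 0 ≤ s := Int.emod_nonneg _ (ne_of_gt hI)
      refine ⟨((d:ℤ)/2 - s).toNat, by simp [Finset.mem_range]; omega, ?_⟩
      have htc : ((((d:ℤ)/2 - s).toNat : ℕ) : ℤ) = (d:ℤ)/2 - s := Int.toNat_of_nonneg (by omega)
      have key : ((a : ℤ) - 1 - (d:ℤ)/2 + (((d:ℤ)/2 - s).toNat : ℤ)) % (I:ℤ) = (b:ℤ) - 1 := by
        rw [htc]
        have h1 : (((a:ℤ) - 1 - (d:ℤ)/2 + ((d:ℤ)/2 - s)) - ((b:ℤ) - 1)) % (I:ℤ) = 0 := by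
          rw [show ((a:ℤ) - 1 - (d:ℤ)/2 + ((d:ℤ)/2 - s)) - ((b:ℤ) - 1)
              = ((a:ℤ) - b) - s by ring, hs]
          exact sub_emod_self _ _
        have h2 := emod_eq_emod_of_sub h1
        rwa [Int.emod_eq_of_lt (show (0:ℤ) ≤ (b:ℤ)-1 by omega) (show (b:ℤ)-1 < (I:ℤ) by omega)] at h2
      simp only [hg, key]
      omega
    · -- ((b - a) % I) ≤ d/2 ; take t = d/2 + s
      set s : ℤ := ((b:ℤ) - (a:ℤ)) % (I:ℤ) with hs
      have hs0 : 0 ≤ s := Int.emod_nonneg _ (ne_of_gt hI)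
      refine ⟨((d:ℤ)/2 + s).toNat, by simp [Finset.mem_range]; omega, ?_⟩
      have htc : ((((d:ℤ)/2 + s).toNat : ℕ) : ℤ) = (d:ℤ)/2 + s := Int.toNat_of_nonneg (by omega)
      have key : ((a : ℤ) - 1 - (d:ℤ)/2 + (((d:ℤ)/2 + s).toNat : ℤ)) % (I:ℤ) = (b:ℤ) - 1 := by
        rw [htc]
        have h1 : (((a:ℤ) - 1 - (d:ℤ)/2 + ((d:ℤ)/2 + s)) - ((b:ℤ) - 1)) % (I:ℤ) = 0 := by
          rw [show ((a:ℤ) - 1 - (d:ℤ)/2 + ((d:ℤ)/2 + s)) - ((b:ℤ) - 1)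
              = -(((b:ℤ) - a) - s) by ring, hs]
          exact Int.emod_eq_zero_of_dvd ((dvd_neg).mpr (dvd_sub_emod _ _))
        have h2 := emod_eq_emod_of_sub h1
        rwa [Int.emod_eq_of_lt (show (0:ℤ) ≤ (b:ℤ)-1 by omega) (show (b:ℤ)-1 < (I:ℤ) by omega)] at h2
      simp only [hg, key]
      omega
  have hinj : Set.InjOn g (Finset.range (d+1)) := by
    intro t1 h1 t2 h2 heq
    simp only [Finset.mem_coe, Finset.mem_range] at h1 h2
    simp only [hg] at heq
    set r1 : ℤ := ((a : ℤ) - 1 - (d:ℤ)/2 + (t1:ℤ)) % (I:ℤ) with hr1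
    set r2 : ℤ := ((a : ℤ) - 1 - (d:ℤ)/2 + (t2:ℤ)) % (I:ℤ) with hr2
    have hr10 : 0 ≤ r1 := Int.emod_nonneg _ (ne_of_gt hI)
    have hr20 : 0 ≤ r2 := Int.emod_nonneg _ (ne_of_gt hI)
    have hreq : r1 = r2 := by omega
    have hz : ((t1:ℤ) - (t2:ℤ)) % (I:ℤ) = 0 := by
      rw [show (t1:ℤ) - (t2:ℤ)
          = ((a:ℤ) - 1 - (d:ℤ)/2 + t1) - ((a:ℤ) - 1 - (d:ℤ)/2 + t2) by ring,
        Int.sub_emod, ← hr1, ← hr2, hreq, sub_self, Int.zero_emod]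
    have hdvd : (I:ℤ) ∣ ((t1:ℤ) - (t2:ℤ)) := Int.dvd_of_emod_eq_zero hz
    by_contra hne
    have habs : (0:ℤ) < |(t1:ℤ) - (t2:ℤ)| := by
      rw [abs_pos]; intro h0; apply hne; omega
    have hle := Int.le_of_dvd habs ((dvd_abs _ _).mpr hdvd)
    have h3 : |(t1:ℤ) - (t2:ℤ)| ≤ (d:ℤ) := by rw [abs_le]; omega
    omega
  have : Wd I d a = (Finset.range (d+1)).image g := by
    ext b
    simp only [Finset.mem_image]
    constructor
    · intro hb; exact hsurj b hb
    · rintro ⟨t, ht, rfl⟩; exact hgmem t ht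
  rw [this, Finset.card_image_of_injOn hinj, Finset.card_range]

lemma natCard_subtype {p : ℕ → Prop} {T : Finset ℕ} (h : ∀ j, p j ↔ j ∈ T) :
    Nat.card {j : ℕ // p j} = T.card := by
  have h1 : {j | p j} = (T : Set ℕ) := Set.ext (fun j => (h j).trans (Finset.mem_coe).symm)
  calc Nat.card {j : ℕ // p j} = ({j | p j} : Set ℕ).ncard := Nat.card_coe_set_eq _
    _ = ((T : Set ℕ)).ncard := by rw [h1]
    _ = T.card := Set.ncard_coe_finset T

lemma natCard_subtype_le {p : ℕ → Prop} {T : Finset ℕ} (h : ∀ j, p j → j ∈ T) :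
    Nat.card {j : ℕ // p j} ≤ T.card := by
  calc Nat.card {j : ℕ // p j} = ({j | p j} : Set ℕ).ncard := Nat.card_coe_set_eq _
    _ ≤ ((T : Set ℕ)).ncard := Set.ncard_le_ncard (fun j hj => h j hj) T.finite_toSet
    _ = T.card := Set.ncard_coe_finset T

/-- neighborhood finset for a factor-A row `m ≤ I`. -/
def lowT (I d m : ℕ) : Finset ℕ :=
  insert m (insert (2*I+1) ((Wd I d m).image (fun b => I + b)))

lemma mem_lowT (I d m : ℕ) (hd0 : 0 < d) (hdI : d < I) (hm1 : 1 ≤ m) (hm2 : m ≤ I) (j : ℕ) :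
    (1 ≤ j ∧ j ≤ 2*I+1 ∧ (j = m ∨ (circGraph I d).Adj m j)) ↔ j ∈ lowT I d m := by
  have hIpos : 0 < I := lt_trans hd0 hdI
  simp only [lowT, Finset.mem_insert, Finset.mem_image]
  constructor
  · rintro ⟨h1, h2, rfl | hadj⟩
    · exact Or.inl rfl
    · rcases (adj_iff I d m j).mp hadj with ⟨hb, _, _⟩ | ⟨ha, _, _⟩ | hAB | hBA
      · exact Or.inr (Or.inl hb)
      · omega
      · obtain ⟨_, _, c, hc1, hc2, rfl, hmin⟩ := hAB
        refine Or.inr (Or.inr ⟨c, ?_, rfl⟩)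
        simp only [Wd, Finset.mem_filter, Finset.mem_Icc]
        exact ⟨⟨hc1, hc2⟩, hmin⟩
      · obtain ⟨_, _, c, hc1, _, hm', _⟩ := hBA; omega
  · rintro (rfl | rfl | ⟨b, hb, rfl⟩)
    · exact ⟨hm1, by omega, Or.inl rfl⟩
    · exact ⟨by omega, le_refl _, Or.inr ((adj_iff I d m _).mpr (Or.inl ⟨rfl, by omega, by omega⟩))⟩
    · simp only [Wd, Finset.mem_filter, Finset.mem_Icc] at hb
      refine ⟨by omega, by omega, Or.inr ((adj_iff I d m _).mpr ?_)⟩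
      exact Or.inr (Or.inr (Or.inl ⟨hm1, hm2, b, hb.1.1, hb.1.2, rfl, hb.2⟩))

lemma lowT_card (I d m : ℕ) (hd0 : 0 < d) (hdI : d < I) (hEven : Even d)
    (hm1 : 1 ≤ m) (hm2 : m ≤ I) : (lowT I d m).card = d + 3 := by
  have hIpos : 0 < I := lt_trans hd0 hdI
  have hWsub : ∀ b ∈ Wd I d m, b ≤ I := by
    intro b hb; simp only [Wd, Finset.mem_filter, Finset.mem_Icc] at hb; exact hb.1.2
  have h2 : (2*I+1) ∉ (Wd I d m).image (fun b => I + b) := by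
    simp only [Finset.mem_image]; rintro ⟨b, hb, hbeq⟩
    have := hWsub b hb; omega
  have h3 : m ∉ insert (2*I+1) ((Wd I d m).image (fun b => I + b)) := by
    simp only [Finset.mem_insert, Finset.mem_image]
    rintro (h | ⟨b, hb, hbeq⟩)
    · omega
    · simp only [Wd, Finset.mem_filter, Finset.mem_Icc] at hb; omega
  rw [lowT, Finset.card_insert_of_notMem h3, Finset.card_insert_of_notMem h2,
    Finset.card_image_of_injective _ (fun x y h => by simpa using h : Function.Injective (fun b => I + b)),
    Wd_card I d m hd0 hdI hEven hm1 hm2]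

/-- neighborhood finset for a factor-B row `I+1 ≤ m ≤ 2I`. -/
def midT (I d m : ℕ) : Finset ℕ :=
  insert m (insert (2*I+1) (Wd I d (m - I)))

lemma mem_midT (I d m : ℕ) (hd0 : 0 < d) (hdI : d < I) (hm1 : I + 1 ≤ m) (hm2 : m ≤ 2*I)
    (j : ℕ) :
    (1 ≤ j ∧ j ≤ 2*I+1 ∧ (j = m ∨ (circGraph I d).Adj m j)) ↔ j ∈ midT I d m := by
  have hIpos : 0 < I := lt_trans hd0 hdI
  have hmc : ((m - I : ℕ) : ℤ) = (m : ℤ) - I := by omega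
  simp only [midT, Finset.mem_insert]
  constructor
  · rintro ⟨h1, h2, rfl | hadj⟩
    · exact Or.inl rfl
    · rcases (adj_iff I d m j).mp hadj with ⟨hb, _, _⟩ | ⟨ha, _, _⟩ | hAB | hBA
      · exact Or.inr (Or.inl hb)
      · omega
      · obtain ⟨hm1', _, _⟩ := hAB; omega
      · obtain ⟨hj1, hj2, c, hc1, hc2, hmc', hmin⟩ := hBA
        refine Or.inr (Or.inr ?_)
        simp only [Wd, Finset.mem_filter, Finset.mem_Icc]
        have hcm : c = m - I := by omega
        subst hcm
        refine ⟨⟨hj1, hj2⟩, ?_⟩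
        rw [min_comm] at hmin
        exact hmin
  · rintro (rfl | rfl | hj)
    · exact ⟨by omega, by omega, Or.inl rfl⟩
    · exact ⟨by omega, le_refl _, Or.inr ((adj_iff I d m _).mpr (Or.inl ⟨rfl, by omega, by omega⟩))⟩
    · simp only [Wd, Finset.mem_filter, Finset.mem_Icc] at hj
      refine ⟨by omega, by omega, Or.inr ((adj_iff I d m _).mpr ?_)⟩
      refine Or.inr (Or.inr (Or.inr ⟨hj.1.1, hj.1.2, m - I, by omega, by omega, by omega, ?_⟩))
      rw [min_comm] at hj
      exact hj.2

lemma midT_card (I d m : ℕ) (hd0 : 0 < d) (hdI : d < I) (hEven : Even d)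
    (hm1 : I + 1 ≤ m) (hm2 : m ≤ 2*I) : (midT I d m).card = d + 3 := by
  have hIpos : 0 < I := lt_trans hd0 hdI
  have hWsub : ∀ b ∈ Wd I d (m - I), b ≤ I := by
    intro b hb; simp only [Wd, Finset.mem_filter, Finset.mem_Icc] at hb; exact hb.1.2
  have h2 : (2*I+1) ∉ Wd I d (m - I) := by
    intro hb; have := hWsub _ hb; omega
  have h3 : m ∉ insert (2*I+1) (Wd I d (m - I)) := by
    simp only [Finset.mem_insert]
    rintro (h | hb)
    · omega
    · have := hWsub _ hb; omega
  rw [midT, Finset.card_insert_of_notMem h3, Finset.card_insert_of_notMem h2,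
    Wd_card I d (m - I) hd0 hdI hEven (by omega) (by omega)]

lemma fillin_low {I d m j : ℕ} (hm2 : m ≤ I) (hF : FillIn (circGraph I d) m j) :
    j = m ∨ (circGraph I d).Adj m j := by
  rcases hF with h | ⟨w, hw⟩
  · exact Or.inl h
  cases w with
  | nil => exact Or.inl rfl
  | cons h p =>
    rename_i v
    have hvmem : v ∈ (SimpleGraph.Walk.cons h p).support := by
      rw [SimpleGraph.Walk.support_cons]
      exact List.mem_cons_of_mem _ p.start_mem_support
    rcases hw v hvmem with rfl | rfl | hlt
    · exact (h.ne rfl).elim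
    · exact Or.inr h
    · exfalso
      rcases (adj_iff I d m v).mp h with ⟨hb, _, _⟩ | ⟨ha, _, _⟩ | hAB | hBA
      · omega
      · omega
      · obtain ⟨_, _, c, hc1, _, hveq, _⟩ := hAB; omega
      · obtain ⟨_, _, c, hc1, _, hmeq, _⟩ := hBA; omega

lemma fillin_mid {I d m j : ℕ} (hd0 : 0 < d) (hdI : d < I) (hEven : Even d)
    (hm1 : I + 1 ≤ m) (hm2 : m ≤ 2*I) (hjm : m ≤ j) (hjM : j ≤ 2*I+1)
    (hF : FillIn (circGraph I d) m j) :
    j = 2*I+1 ∨ j ≤ m + d ∨ 2*I+1-d ≤ j := by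
  by_contra hcon
  push_neg at hcon
  obtain ⟨hj1, hj2, hj3⟩ := hcon
  rcases hF with rfl | ⟨w, hw⟩
  · omega
  have hIpos : 0 < I := lt_trans hd0 hdI
  have hI : (0:ℤ) < (I:ℤ) := by exact_mod_cast hIpos
  have h2e : 2 * ((d:ℤ)/2) = (d:ℤ) := by
    obtain ⟨t, ht⟩ := hEven; subst ht; push_cast; omega
  have key : ∀ (a jj : ℕ) (w : (circGraph I d).Walk a jj),
      (∀ v ∈ w.support, v = m ∨ v = jj ∨ v < m) → jj = j →
      ((I + 1 ≤ a ∧ a ≤ m) ∨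
        (1 ≤ a ∧ a ≤ I ∧ ∃ b : ℕ, 1 ≤ b ∧ I + b ≤ m ∧
          min (((a:ℤ) - (b:ℤ)) % (I:ℤ)) (((b:ℤ) - (a:ℤ)) % (I:ℤ)) ≤ (d:ℤ)/2)) → False := by
    intro a jj w
    induction w with
    | nil =>
      intro _ hjj hg
      subst hjj
      rcases hg with ⟨g1, g2⟩ | ⟨g1, g2, _⟩ <;> omega
    | cons h p ih =>
      rename_i x v jjv
      intro hsupp hjj hg
      have hjj2 : j = jjv := hjj.symm
      subst hjj2
      have hsupp' : ∀ u ∈ p.support, u = m ∨ u = j ∨ u < m := by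
        intro u hu
        exact hsupp u (by rw [SimpleGraph.Walk.support_cons]; exact List.mem_cons_of_mem _ hu)
      have hv : v = m ∨ v = j ∨ v < m := hsupp' v p.start_mem_support
      rcases hv with rfl | hvj | hlt
      · exact ih hsupp' rfl (Or.inl ⟨hm1, le_refl _⟩)
      · -- the walk's first edge already hits j : contradiction via adjacency
        rcases (adj_iff I d x v).mp h with ⟨hb, _, _⟩ | ⟨ha, _, _⟩ | hAB | hBA
        · exact hj1 (by omega)
        · rcases hg with ⟨g1, g2⟩ | ⟨g1, g2, _⟩ <;> omega
        · obtain ⟨hx1, hx2, c, hc1, hc2, hjc, hminxc⟩ := hAB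
          rcases hg with ⟨g1, g2⟩ | ⟨g1, g2, b, hb1, hb2, hminxb⟩
          · omega
          · have h1 : min (((b:ℤ) - (x:ℤ)) % (I:ℤ)) (((x:ℤ) - (b:ℤ)) % (I:ℤ)) ≤ (d:ℤ)/2 := by
              rw [min_comm]; exact hminxb
            have htri := min_triangle hI (b:ℤ) (x:ℤ) (c:ℤ) ((d:ℤ)/2) h1 hminxc
            rw [h2e] at htri
            have e2 : ((c:ℤ) - (b:ℤ)) % (I:ℤ) = (c:ℤ) - (b:ℤ) :=
              Int.emod_eq_of_lt (show (0:ℤ) ≤ (c:ℤ) - (b:ℤ) by omega)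
                (show (c:ℤ) - (b:ℤ) < (I:ℤ) by omega)
            have e1 : ((b:ℤ) - (c:ℤ)) % (I:ℤ) = (b:ℤ) - (c:ℤ) + (I:ℤ) := by
              have h0 : (((b:ℤ) - c) - ((b:ℤ) - c + I)) % (I:ℤ) = 0 := by
                rw [show ((b:ℤ) - c) - ((b:ℤ) - c + I) = (I:ℤ) * (-1) by ring]
                exact Int.mul_emod_right _ _
              have hh2 := emod_eq_emod_of_sub h0
              rwa [Int.emod_eq_of_lt (show (0:ℤ) ≤ (b:ℤ) - (c:ℤ) + (I:ℤ) by omega)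
                (show (b:ℤ) - (c:ℤ) + (I:ℤ) < (I:ℤ) by omega)] at hh2
            rcases min_le_iff.mp htri with hcase | hcase <;> omega
        · obtain ⟨hj1', hj2', _⟩ := hBA; omega
      · -- v < m : establish the invariant for v and recurse
        rcases Nat.lt_or_ge v (I+1) with hvI | hvI
        · -- v is a factor-A vertex
          rcases (adj_iff I d x v).mp h with ⟨hb, _, _⟩ | ⟨ha, _, _⟩ | hAB | hBA
          · omega
          · rcases hg with ⟨g1, g2⟩ | ⟨g1, g2, _⟩ <;> omega
          · obtain ⟨_, _, c, hc1, _, hveq, _⟩ := hAB; omega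
          · obtain ⟨hv1, hv2, c, hc1, hc2, hxc, hminvc⟩ := hBA
            rcases hg with ⟨g1, g2⟩ | ⟨g1, g2, _⟩
            · exact ih hsupp' rfl (Or.inr ⟨hv1, hv2, c, hc1, by omega, hminvc⟩)
            · omega
        · exact ih hsupp' rfl (Or.inl ⟨hvI, Nat.le_of_lt hlt⟩)
  exact key m j w hw rfl (Or.inl ⟨hm1, le_refl _⟩)

lemma nQrow_low (I d m : ℕ) (hd0 : 0 < d) (hdI : d < I) (hEven : Even d)
    (hm1 : 1 ≤ m) (hm2 : m ≤ I) :
    nQrow (circGraph I d) (2*I+1) m = d + 3 :=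
  (natCard_subtype (mem_lowT I d m hd0 hdI hm1 hm2)).trans
    (lowT_card I d m hd0 hdI hEven hm1 hm2)

lemma nQrow_mid (I d m : ℕ) (hd0 : 0 < d) (hdI : d < I) (hEven : Even d)
    (hm1 : I + 1 ≤ m) (hm2 : m ≤ 2*I) :
    nQrow (circGraph I d) (2*I+1) m = d + 3 :=
  (natCard_subtype (mem_midT I d m hd0 hdI hm1 hm2)).trans
    (midT_card I d m hd0 hdI hEven hm1 hm2)

lemma nQrow_top (I d : ℕ) (hd0 : 0 < d) (hdI : d < I) :
    nQrow (circGraph I d) (2*I+1) (2*I+1) = 2*I+1 := by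
  have hIpos : 0 < I := lt_trans hd0 hdI
  have h := natCard_subtype (p := fun j => 1 ≤ j ∧ j ≤ 2*I+1 ∧
      (j = 2*I+1 ∨ (circGraph I d).Adj (2*I+1) j)) (T := Finset.Icc 1 (2*I+1)) ?_
  · rw [nQrow, h, Nat.card_Icc]; omega
  · intro j
    simp only [Finset.mem_Icc]
    constructor
    · rintro ⟨h1, h2, _⟩; exact ⟨h1, h2⟩
    · rintro ⟨h1, h2⟩
      refine ⟨h1, h2, ?_⟩
      rcases eq_or_lt_of_le h2 with rfl | hlt
      · exact Or.inl rfl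
      · exact Or.inr ((adj_iff I d _ j).mpr (Or.inr (Or.inl ⟨rfl, by omega, by omega⟩)))

lemma nLrow_low (I d m : ℕ) (hd0 : 0 < d) (hdI : d < I) (hm1 : 1 ≤ m) (hm2 : m ≤ I) :
    nLrow (circGraph I d) (2*I+1) m ≤ (lowT I d m).card := by
  refine natCard_subtype_le ?_
  rintro j ⟨hj1, hj2, hF⟩
  exact (mem_lowT I d m hd0 hdI hm1 hm2 j).mp ⟨by omega, hj2, fillin_low hm2 hF⟩

lemma nLrow_mid (I d m : ℕ) (hd0 : 0 < d) (hdI : d < I) (hEven : Even d)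
    (hm1 : I + 1 ≤ m) (hm2 : m ≤ 2*I) :
    nLrow (circGraph I d) (2*I+1) m ≤ 2*d + 2 := by
  have hIpos : 0 < I := lt_trans hd0 hdI
  have hle : nLrow (circGraph I d) (2*I+1) m ≤
      (Finset.Icc m (m+d) ∪ Finset.Icc (2*I+1-d) (2*I+1)).card := by
    refine natCard_subtype_le ?_
    rintro j ⟨hj1, hj2, hF⟩
    rcases fillin_mid hd0 hdI hEven hm1 hm2 hj1 hj2 hF with h | h | h
    · simp only [Finset.mem_union, Finset.mem_Icc]; right; omega
    · simp only [Finset.mem_union, Finset.mem_Icc]; left; omega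
    · simp only [Finset.mem_union, Finset.mem_Icc]; right; omega
  refine le_trans hle (le_trans (Finset.card_union_le _ _) ?_)
  rw [Nat.card_Icc, Nat.card_Icc]
  omega

lemma nLrow_top (I d : ℕ) :
    nLrow (circGraph I d) (2*I+1) (2*I+1) ≤ 1 := by
  have h : nLrow (circGraph I d) (2*I+1) (2*I+1) ≤ ({2*I+1} : Finset ℕ).card := by
    refine natCard_subtype_le ?_
    rintro j ⟨hj1, hj2, _⟩
    simp only [Finset.mem_singleton]; omega
  simpa using h

end Stmt16Aux


open Stmt16Aux in
/-- Conclusion of Proposition 4 (favourable circulant design): with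
`n_Q = Σ_{m=1}^{2I+1} n_{Q,m}`, one has `n_Q = 1 + 6I + 2(d+1)I`, and the fill-in
`n_L = Σ_{m=1}^{2I+1} n_{L,m}` satisfies `n_L ≤ 3 n_Q`. -/
theorem stmt_16 (I d : ℕ) (hEven : Even d) (hd0 : 0 < d) (hdI : d < I) :
    (∑ m ∈ Finset.Icc 1 (2 * I + 1), nQrow (circGraph I d) (2 * I + 1) m
        = 1 + 6 * I + 2 * (d + 1) * I)
    ∧ ∑ m ∈ Finset.Icc 1 (2 * I + 1), nLrow (circGraph I d) (2 * I + 1) m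
        ≤ 3 * ∑ m ∈ Finset.Icc 1 (2 * I + 1), nQrow (circGraph I d) (2 * I + 1) m := by
  have hIpos : 0 < I := lt_trans hd0 hdI
  have hQ : ∀ m ∈ Finset.Icc 1 (2*I), nQrow (circGraph I d) (2*I+1) m = d + 3 := by
    intro m hm
    simp only [Finset.mem_Icc] at hm
    rcases le_or_gt m I with h | h
    · exact nQrow_low I d m hd0 hdI hEven hm.1 h
    · exact nQrow_mid I d m hd0 hdI hEven h hm.2
  have hsplit : Finset.Icc 1 (2*I+1) = insert (2*I+1) (Finset.Icc 1 (2*I)) := by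
    ext x; simp only [Finset.mem_Icc, Finset.mem_insert]; omega
  have hnotmem : (2*I+1) ∉ Finset.Icc 1 (2*I) := by simp [Finset.mem_Icc]
  have hQsum : ∑ m ∈ Finset.Icc 1 (2*I+1), nQrow (circGraph I d) (2*I+1) m
      = 1 + 6 * I + 2 * (d + 1) * I := by
    rw [hsplit, Finset.sum_insert hnotmem, nQrow_top I d hd0 hdI,
      Finset.sum_congr rfl hQ, Finset.sum_const, Nat.card_Icc, smul_eq_mul,
      show 2*I+1-1 = 2*I by omega]
    ring
  refine ⟨hQsum, ?_⟩
  have hterm : ∀ m ∈ Finset.Icc 1 (2*I+1),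
      nLrow (circGraph I d) (2*I+1) m ≤ 3 * nQrow (circGraph I d) (2*I+1) m := by
    intro m hm
    simp only [Finset.mem_Icc] at hm
    rcases le_or_gt m I with h | h
    · rw [nQrow_low I d m hd0 hdI hEven hm.1 h]
      have := nLrow_low I d m hd0 hdI hm.1 h
      rw [lowT_card I d m hd0 hdI hEven hm.1 h] at this
      omega
    · rcases le_or_gt m (2*I) with h2 | h2
      · rw [nQrow_mid I d m hd0 hdI hEven h h2]
        have := nLrow_mid I d m hd0 hdI hEven h h2
        omega
      · have hm' : m = 2*I+1 := by omega
        subst hm'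
        rw [nQrow_top I d hd0 hdI]
        have := nLrow_top I d
        omega
  calc ∑ m ∈ Finset.Icc 1 (2*I+1), nLrow (circGraph I d) (2*I+1) m
      ≤ ∑ m ∈ Finset.Icc 1 (2*I+1), 3 * nQrow (circGraph I d) (2*I+1) m :=
        Finset.sum_le_sum hterm
    _ = 3 * ∑ m ∈ Finset.Icc 1 (2*I+1), nQrow (circGraph I d) (2*I+1) m := by
        rw [Finset.mul_sum]
end

section
/- Fix integers I ≥ 1 and d ≥ 2, and define r(1) = 1 and r(j) = ⌈(j−1)/d⌉ for 2 ≤ j ≤ I. Let G be any simple graph on the vertex set {1,…,2I+1} (vertices 1,…,I representing levels of the first factor, vertices I+1,…,2I levels of the second factor, vertex 2I+1 the intercept) that contains, for every j ∈ {1,…,I}, the edges {j, I+j} and {r(j), I+j}. Then for every j ∈ {1,…,I} and every m with r(j) ≤ m ≤ j, the vertex I+j is a fill-in neighbor of I+m. Consequently, n_L ≥ Σ_{j=2}^{I} (j − r(j) + 1). -/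
/-- `r(1) = 1` and `r(j) = ⌈(j-1)/d⌉` for `j ≥ 2`. -/
def rfun (d j : ℕ) : ℕ := if j = 1 then 1 else (j - 1 + d - 1) / d

lemma rfun_pos (d j : ℕ) (hd : 2 ≤ d) (hj : 1 ≤ j) : 1 ≤ rfun d j := by
  unfold rfun
  split
  · omega
  · rw [Nat.one_le_div_iff (by omega)]
    omega

lemma rfun_lt (d j : ℕ) (hd : 2 ≤ d) (hj : 2 ≤ j) : rfun d j < j := by
  unfold rfun
  rw [if_neg (by omega), Nat.div_lt_iff_lt_mul (by omega : 0 < d)]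
  have h2 : 2 * d ≤ j * d := Nat.mul_le_mul_right d hj
  have h3 : j * 2 ≤ j * d := Nat.mul_le_mul_left j hd
  omega

lemma descend_s17 (I d : ℕ) (hd : 2 ≤ d) (G : SimpleGraph ℕ)
    (hedge : ∀ j ∈ Finset.Icc 1 I, G.Adj j (I + j) ∧ G.Adj (rfun d j) (I + j)) :
    ∀ a, 1 ≤ a → a ≤ I → ∃ w : G.Walk a 1, ∀ v ∈ w.support, v ≤ I + a := by
  intro a
  induction a using Nat.strong_induction_on with
  | _ a ih =>
    intro ha1 haI
    rcases eq_or_lt_of_le ha1 with h1 | h2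
    · subst h1
      refine ⟨SimpleGraph.Walk.nil, ?_⟩
      intro v hv
      simp only [SimpleGraph.Walk.support_nil, List.mem_singleton] at hv
      omega
    · set b := rfun d a with hb
      have hblt : b < a := rfun_lt d a hd (by omega)
      have hb1 : 1 ≤ b := rfun_pos d a hd (by omega)
      obtain ⟨w', hw'⟩ := ih b hblt hb1 (by omega)
      have he := hedge a (by simp; omega)
      refine ⟨SimpleGraph.Walk.cons he.1 (SimpleGraph.Walk.cons he.2.symm w'), ?_⟩
      intro v hv
      simp only [SimpleGraph.Walk.support_cons, List.mem_cons] at hv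
      rcases hv with rfl | rfl | hv
      · omega
      · omega
      · have := hw' v hv; omega

/-- Key step in the proof of Proposition 7 (worst-case balanced design): if the graph `G`
on the vertices `{1,…,2I+1}` contains the edges `{j, I+j}` and `{r(j), I+j}` for every
`j ∈ {1,…,I}`, then for every such `j` and every `m` with `r(j) ≤ m ≤ j` the vertex `I+j`
is a fill-in neighbor of `I+m`; consequently `n_L ≥ Σ_{j=2}^{I} (j - r(j) + 1)`. -/
theorem stmt_17 (I d : ℕ) (hI : 1 ≤ I) (hd : 2 ≤ d) (G : SimpleGraph ℕ)
    (hedge : ∀ j ∈ Finset.Icc 1 I, G.Adj j (I + j) ∧ G.Adj (rfun d j) (I + j)) :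
    (∀ j ∈ Finset.Icc 1 I, ∀ m, rfun d j ≤ m → m ≤ j → FillIn G (I + m) (I + j))
    ∧ ∑ j ∈ Finset.Icc 2 I, (j - rfun d j + 1)
        ≤ ∑ m ∈ Finset.Icc 1 (2 * I + 1), nLrow G (2 * I + 1) m := by
  have part1 : ∀ j ∈ Finset.Icc 1 I, ∀ m, rfun d j ≤ m → m ≤ j → FillIn G (I + m) (I + j) := by
    intro j hj m hrm hmj
    simp only [Finset.mem_Icc] at hj
    rcases eq_or_lt_of_le hmj with rfl | hmlt
    · exact Or.inl rfl
    · -- m < j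
      have hrj1 : 1 ≤ rfun d j := rfun_pos d j hd (by omega)
      have hm1 : 1 ≤ m := by omega
      have hj2 : 2 ≤ j := by omega
      obtain ⟨w1, hw1⟩ := descend_s17 I d hd G hedge m hm1 (by omega)
      obtain ⟨w2, hw2⟩ := descend_s17 I d hd G hedge (rfun d j) hrj1 (by omega)
      have he_m := hedge m (by simp; omega)
      have he_j := hedge j (by simp; omega)
      refine Or.inr ⟨SimpleGraph.Walk.cons he_m.1.symm
        (w1.append (w2.reverse.append (SimpleGraph.Walk.cons he_j.2 SimpleGraph.Walk.nil))), ?_⟩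
      intro v hv
      have hv' : v = I + m ∨ v = I + j ∨ v = rfun d j ∨ v ∈ w1.support ∨ v ∈ w2.support := by
        simp only [SimpleGraph.Walk.support_cons, SimpleGraph.Walk.mem_support_append_iff,
          SimpleGraph.Walk.support_reverse, List.mem_cons, List.mem_reverse,
          SimpleGraph.Walk.support_nil, List.mem_singleton, List.not_mem_nil] at hv
        tauto
      rcases hv' with rfl | rfl | rfl | hv1 | hv2
      · omega
      · omega
      · omega
      · have := hw1 v hv1; omega
      · have := hw2 v hv2; omega
  refine ⟨part1, ?_⟩
  -- Step A
  have stepA : ∀ m ∈ Finset.Icc 1 I,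
      ((Finset.Icc 2 I).filter (fun j => rfun d j ≤ m ∧ m ≤ j)).card
        ≤ nLrow G (2 * I + 1) (I + m) := by
    intro m hm
    simp only [Finset.mem_Icc] at hm
    rw [nLrow]
    have hcard : Nat.card {j : ℕ // I + m ≤ j ∧ j ≤ 2 * I + 1 ∧ FillIn G (I + m) j}
        = {j : ℕ | I + m ≤ j ∧ j ≤ 2 * I + 1 ∧ FillIn G (I + m) j}.ncard :=
      Nat.card_coe_set_eq _
    rw [hcard]
    have hfin : {j : ℕ | I + m ≤ j ∧ j ≤ 2 * I + 1 ∧ FillIn G (I + m) j}.Finite :=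
      (Set.finite_Icc 0 (2 * I + 1)).subset (by intro x hx; simp at hx ⊢; omega)
    calc ((Finset.Icc 2 I).filter (fun j => rfun d j ≤ m ∧ m ≤ j)).card
        = (((Finset.Icc 2 I).filter (fun j => rfun d j ≤ m ∧ m ≤ j)).image
            (fun j => I + j)).card := by
          rw [Finset.card_image_of_injective _ (fun x y h => Nat.add_left_cancel h)]
      _ = ((((Finset.Icc 2 I).filter (fun j => rfun d j ≤ m ∧ m ≤ j)).image
            (fun j => I + j) : Finset ℕ) : Set ℕ).ncard := (Set.ncard_coe_finset _).symm
      _ ≤ {j : ℕ | I + m ≤ j ∧ j ≤ 2 * I + 1 ∧ FillIn G (I + m) j}.ncard := by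
          apply Set.ncard_le_ncard _ hfin
          intro x hx
          simp only [Finset.coe_image, Set.mem_image, Finset.mem_coe, Finset.mem_filter,
            Finset.mem_Icc] at hx
          obtain ⟨j, ⟨⟨hj2, hjI⟩, hrm, hmj⟩, rfl⟩ := hx
          refine ⟨by omega, by omega, part1 j (by simp; omega) m hrm hmj⟩
  -- Step B : double counting
  have stepB : ∑ j ∈ Finset.Icc 2 I, (j - rfun d j + 1)
      = ∑ m ∈ Finset.Icc 1 I,
          ((Finset.Icc 2 I).filter (fun j => rfun d j ≤ m ∧ m ≤ j)).card := by
    have h1 : ∀ m, ((Finset.Icc 2 I).filter (fun j => rfun d j ≤ m ∧ m ≤ j)).card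
        = ∑ j ∈ Finset.Icc 2 I, if rfun d j ≤ m ∧ m ≤ j then 1 else 0 := by
      intro m; rw [Finset.card_filter]
    simp only [h1]
    rw [Finset.sum_comm]
    apply Finset.sum_congr rfl
    intro j hj
    simp only [Finset.mem_Icc] at hj
    have hrj1 : 1 ≤ rfun d j := rfun_pos d j hd (by omega)
    have hrjlt : rfun d j < j := rfun_lt d j hd (by omega)
    rw [← Finset.card_filter]
    have : (Finset.Icc 1 I).filter (fun m => rfun d j ≤ m ∧ m ≤ j) = Finset.Icc (rfun d j) j := by
      ext m
      simp only [Finset.mem_filter, Finset.mem_Icc]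
      omega
    rw [this, Nat.card_Icc]
    omega
  -- Step C : reindex and conclude
  have stepC : ∑ m ∈ Finset.Icc 1 I, nLrow G (2 * I + 1) (I + m)
      ≤ ∑ m ∈ Finset.Icc 1 (2 * I + 1), nLrow G (2 * I + 1) m := by
    have himg : (Finset.Icc 1 I).image (fun m => I + m) = Finset.Icc (I + 1) (I + I) := by
      ext x
      simp only [Finset.mem_image, Finset.mem_Icc]
      constructor
      · rintro ⟨m, ⟨h1, h2⟩, rfl⟩; omega
      · intro ⟨h1, h2⟩; exact ⟨x - I, by omega, by omega⟩
    have hsum : ∑ m ∈ Finset.Icc 1 I, nLrow G (2 * I + 1) (I + m)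
        = ∑ x ∈ (Finset.Icc 1 I).image (fun m => I + m), nLrow G (2 * I + 1) x :=
      (Finset.sum_image (fun x _ y _ h => Nat.add_left_cancel h)).symm
    rw [hsum, himg]
    apply Finset.sum_le_sum_of_subset
    intro x hx
    simp only [Finset.mem_Icc] at hx ⊢
    omega
  calc ∑ j ∈ Finset.Icc 2 I, (j - rfun d j + 1)
      = ∑ m ∈ Finset.Icc 1 I, ((Finset.Icc 2 I).filter (fun j => rfun d j ≤ m ∧ m ≤ j)).card := stepB
    _ ≤ ∑ m ∈ Finset.Icc 1 I, nLrow G (2 * I + 1) (I + m) := Finset.sum_le_sum stepA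
    _ ≤ _ := stepC
end
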